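/- arXiv:1909.09426 — 10 statements merged into one kernel-verified Lean document; each statement's English description precedes it below -/
import Mathlib

section
/- Let A be a finite dimensional algebra over a field F, σ an F-algebra automorphism of A, and δ a σ-derivation of A. If {a_1,...,a_r} is an F-basis of A, then {a_1,...,a_r} is a basis of the Ore extension S = A[x;σ,δ] as a left module over R = F[x]. -/
section Aux
variable {F : Type*} [Field F] {A : Type*} [Ring A] [Algebra F A]
    {S : Type*} [Ring S] [Algebra F S]
    (σ : A ≃ₐ[F] A) (ι : A →ₐ[F] S) (X : S)
    (c : S ≃ₗ[F] (ℕ →₀ A))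

lemma ore_c_single (hc : ∀ s : S, s = (c s).sum fun n f => ι f * X ^ n)
    (n : ℕ) (b : A) : c (ι b * X ^ n) = Finsupp.single n b := by
  have h1 : c.symm (Finsupp.single n b) = ι b * X ^ n := by
    have h := hc (c.symm (Finsupp.single n b))
    rw [c.apply_symm_apply] at h
    rw [h, Finsupp.sum_single_index]
    simp
  rw [← h1, c.apply_symm_apply]

lemma ore_shift (hc : ∀ s : S, s = (c s).sum fun n f => ι f * X ^ n)
    (s : S) : c (s * X) = Finsupp.mapDomain (· + 1) (c s) := by
  conv_lhs => rw [hc s]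
  rw [Finsupp.sum_mul]
  have e1 : ((c s).sum fun n f => (ι f * X ^ n) * X) = (c s).sum fun n f => ι f * X ^ (n+1) :=
    Finsupp.sum_congr fun n _ => by rw [mul_assoc, ← pow_succ]
  rw [e1, map_finsuppSum]
  have e2 : ((c s).sum fun n f => c (ι f * X ^ (n+1))) = (c s).sum fun n f => Finsupp.single (n+1) f :=
    Finsupp.sum_congr fun n _ => ore_c_single ι X c hc (n+1) _
  rw [e2]
  rfl


variable (δ : A →ₗ[F] A)

lemma ore_rec (hc : ∀ s : S, s = (c s).sum fun n f => ι f * X ^ n)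
    (hX : ∀ a : A, X * ι a = ι (σ a) * X + ι (δ a)) (m : ℕ) (b : A) :
    c (X ^ (m+1) * ι b)
      = Finsupp.mapDomain (· + 1) (c (X ^ m * ι (σ b))) + c (X ^ m * ι (δ b)) := by
  have h : X ^ (m+1) * ι b = (X ^ m * ι (σ b)) * X + X ^ m * ι (δ b) := by
    rw [pow_succ, mul_assoc, hX, mul_add, ← mul_assoc]
  rw [h, map_add, ore_shift ι X c hc]

lemma ore_keyA (hc : ∀ s : S, s = (c s).sum fun n f => ι f * X ^ n)
    (hX : ∀ a : A, X * ι a = ι (σ a) * X + ι (δ a)) :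
    ∀ (m : ℕ) (b : A) (k : ℕ), m < k → c (X ^ m * ι b) k = 0 := by
  intro m
  induction m with
  | zero =>
    intro b k hk
    have h : c (X ^ 0 * ι b) = Finsupp.single 0 b := by
      simpa using ore_c_single ι X c hc 0 b
    rw [h, Finsupp.single_eq_of_ne (by omega)]
  | succ m ih =>
    intro b k hk
    obtain ⟨j, rfl⟩ : ∃ j, k = j + 1 := ⟨k - 1, by omega⟩
    rw [ore_rec σ ι X c δ hc hX, Finsupp.add_apply,
      Finsupp.mapDomain_apply (f := (· + 1)) (add_left_injective 1),
      ih _ _ (by omega), ih _ _ (by omega), add_zero]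

lemma ore_keyB (hc : ∀ s : S, s = (c s).sum fun n f => ι f * X ^ n)
    (hX : ∀ a : A, X * ι a = ι (σ a) * X + ι (δ a)) :
    ∀ (m : ℕ) (b : A), c (X ^ m * ι b) m = (σ ^ m) b := by
  intro m
  induction m with
  | zero =>
    intro b
    have h : c (X ^ 0 * ι b) = Finsupp.single 0 b := by
      simpa using ore_c_single ι X c hc 0 b
    rw [h, Finsupp.single_eq_same, pow_zero]
    rfl
  | succ m ih =>
    intro b
    rw [ore_rec σ ι X c δ hc hX, Finsupp.add_apply,
      Finsupp.mapDomain_apply (f := (· + 1)) (add_left_injective 1),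
      ih, ore_keyA σ ι X c δ hc hX m _ (m+1) (by omega), add_zero, pow_succ,
      AlgEquiv.mul_apply]

lemma ore_poly (hc : ∀ s : S, s = (c s).sum fun n f => ι f * X ^ n)
    (hX : ∀ a : A, X * ι a = ι (σ a) * X + ι (δ a))
    (k : ℕ) (p : Polynomial F) (hp : p.natDegree ≤ k) (b : A) :
    c (Polynomial.aeval X p * ι b) k = p.coeff k • ((σ ^ k) b) := by
  rw [Polynomial.aeval_eq_sum_range' (Nat.lt_succ_of_le hp), Finset.sum_mul]
  have e1 : ∀ j ∈ Finset.range (k+1),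
      (p.coeff j • X ^ j) * ι b = p.coeff j • (X ^ j * ι b) := by
    intro j _; rw [smul_mul_assoc]
  rw [Finset.sum_congr rfl e1, map_sum]
  rw [Finsupp.finset_sum_apply]
  have e2 : ∀ j ∈ Finset.range (k+1),
      (c (p.coeff j • (X ^ j * ι b))) k = p.coeff j • (c (X ^ j * ι b) k) := by
    intro j _; rw [map_smul, Finsupp.smul_apply]
  rw [Finset.sum_congr rfl e2]
  rw [Finset.sum_eq_single k]
  · rw [ore_keyB σ ι X c δ hc hX]
  · intro j hj hjk
    rw [ore_keyA σ ι X c δ hc hX j b k (by simp at hj; omega), smul_zero]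
  · intro h; simp at h

lemma ore_sum_coeff (hc : ∀ s : S, s = (c s).sum fun n f => ι f * X ^ n)
    (hX : ∀ a : A, X * ι a = ι (σ a) * X + ι (δ a))
    (r : ℕ) (a : Module.Basis (Fin r) F A) (g : Fin r → Polynomial F) (k : ℕ)
    (hg : ∀ i, (g i).natDegree ≤ k) :
    c (∑ i : Fin r, Polynomial.aeval X (g i) * ι (a i)) k
      = (σ ^ k) (∑ i : Fin r, (g i).coeff k • a i) := by
  rw [map_sum, Finsupp.finset_sum_apply, map_sum]
  refine Finset.sum_congr rfl fun i _ => ?_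
  rw [ore_poly σ ι X c δ hc hX k (g i) (hg i) (a i), map_smul]

lemma ore_inj (hc : ∀ s : S, s = (c s).sum fun n f => ι f * X ^ n)
    (hX : ∀ a : A, X * ι a = ι (σ a) * X + ι (δ a))
    (r : ℕ) (a : Module.Basis (Fin r) F A) :
    ∀ (N : ℕ) (g : Fin r → Polynomial F), (∀ i, (g i).natDegree ≤ N) →
      (∑ i : Fin r, Polynomial.aeval X (g i) * ι (a i)) = 0 → ∀ i, g i = 0 := by
  have coeff0 : ∀ (N : ℕ) (g : Fin r → Polynomial F), (∀ i, (g i).natDegree ≤ N) →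
      (∑ i : Fin r, Polynomial.aeval X (g i) * ι (a i)) = 0 →
      ∀ i, (g i).coeff N = 0 := by
    intro N g hg h0
    have h1 := ore_sum_coeff σ ι X c δ hc hX r a g N hg
    rw [h0, map_zero, Finsupp.zero_apply] at h1
    have h2 : (∑ i : Fin r, (g i).coeff N • a i) = 0 :=
      (σ ^ N).injective (by rw [map_zero, ← h1])
    exact fun i => Fintype.linearIndependent_iff.mp a.linearIndependent _ h2 i
  intro N
  induction N with
  | zero =>
    intro g hg h0 i
    have h := coeff0 0 g hg h0 i
    have := Polynomial.eq_C_of_natDegree_le_zero (hg i)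
    rw [this, h, map_zero]
  | succ N ih =>
    intro g hg h0 i
    have h := coeff0 (N+1) g hg h0
    have hg' : ∀ i, (g i).natDegree ≤ N := by
      intro i
      rw [Polynomial.natDegree_le_iff_coeff_eq_zero]
      intro j hj
      rcases eq_or_lt_of_le (Nat.succ_le_of_lt hj) with hj' | hj'
      · rw [← hj']; exact h i
      · exact Polynomial.coeff_eq_zero_of_natDegree_lt (lt_of_le_of_lt (hg i) hj')
    exact ih g hg' h0 i

lemma ore_exist (hc : ∀ s : S, s = (c s).sum fun n f => ι f * X ^ n)
    (hX : ∀ a : A, X * ι a = ι (σ a) * X + ι (δ a))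
    (r : ℕ) (a : Module.Basis (Fin r) F A) :
    ∀ (N : ℕ) (s : S), (∀ k, N ≤ k → c s k = 0) →
      ∃ g : Fin r → Polynomial F,
        s = ∑ i : Fin r, Polynomial.aeval X (g i) * ι (a i) := by
  intro N
  induction N with
  | zero =>
    intro s hs
    have h1 : c s = 0 := Finsupp.ext fun k => hs k (Nat.zero_le k)
    have h2 : s = 0 := by
      have := congrArg c.symm h1
      rwa [c.symm_apply_apply, map_zero] at this
    exact ⟨0, by simp [h2]⟩
  | succ N ih =>
    intro s hs
    set lam : Fin r → F := fun i => a.repr ((σ ^ N).symm (c s N)) i with hlam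
    set h : Fin r → Polynomial F := fun i => Polynomial.monomial N (lam i) with hh
    set t := ∑ i : Fin r, Polynomial.aeval X (h i) * ι (a i) with ht
    have hdeg : ∀ i, (h i).natDegree ≤ N := fun i => Polynomial.natDegree_monomial_le _
    have key : ∀ k, N ≤ k → c t k = c s k := by
      intro k hk
      rw [ht, ore_sum_coeff σ ι X c δ hc hX r a h k (fun i => le_trans (hdeg i) hk)]
      rcases eq_or_lt_of_le hk with hk' | hk'
      · subst hk'
        have e : (∑ i : Fin r, (h i).coeff N • a i) = (σ ^ N).symm (c s N) := by
          simp only [hh, Polynomial.coeff_monomial, if_pos rfl]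
          exact a.sum_repr _
        rw [e, AlgEquiv.apply_symm_apply]
      · have e : ∀ i, (h i).coeff k = 0 := by
          intro i; exact Polynomial.coeff_eq_zero_of_natDegree_lt (lt_of_le_of_lt (hdeg i) hk')
        simp only [e, zero_smul, Finset.sum_const_zero, map_zero]
        exact (hs k (by omega)).symm
    have hs' : ∀ k, N ≤ k → c (s - t) k = 0 := by
      intro k hk
      rw [map_sub, Finsupp.sub_apply, key k hk, sub_self]
    obtain ⟨g', hg'⟩ := ih (s - t) hs'
    refine ⟨g' + h, ?_⟩
    have : s = (s - t) + t := by abel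
    rw [this, hg', ht, ← Finset.sum_add_distrib]
    refine Finset.sum_congr rfl fun i _ => ?_
    rw [Pi.add_apply, map_add, add_mul]

end Aux


/-- STATEMENT 0: If `{a 1, ..., a r}` is an `F`-basis of the finite dimensional
`F`-algebra `A`, then it is a basis of the Ore extension `S = A[x;σ,δ]` as a left
module over `R = F[x]` (embedded in `S` via `aeval X`).  The Ore extension is
presented by an algebra map `ι : A → S`, an element `X` with `X * ι a = ι (σ a) * X + ι (δ a)`,
and a coefficient isomorphism `c : S ≃ (ℕ →₀ A)` reconstructing each element as
`∑ ι (coefficient n) * X ^ n`. -/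
theorem ore_left_basis
    (F : Type*) [Field F] (A : Type*) [Ring A] [Algebra F A] [FiniteDimensional F A]
    (σ : A ≃ₐ[F] A) (δ : A →ₗ[F] A)
    (hder : ∀ a b : A, δ (a * b) = σ a * δ b + δ a * b)
    (S : Type*) [Ring S] [Algebra F S]
    (ι : A →ₐ[F] S) (X : S)
    (hX : ∀ a : A, X * ι a = ι (σ a) * X + ι (δ a))
    (c : S ≃ₗ[F] (ℕ →₀ A))
    (hc : ∀ s : S, s = (c s).sum fun n f => ι f * X ^ n)
    (r : ℕ) (a : Module.Basis (Fin r) F A) :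
    ∀ s : S, ∃! g : Fin r → Polynomial F,
      s = ∑ i : Fin r, Polynomial.aeval X (g i) * ι (a i) := by
  intro s
  obtain ⟨g, hg⟩ := ore_exist σ ι X c δ hc hX r a (((c s).support.sup id) + 1) s
    (fun k hk => by
      by_contra hne
      have hmem : k ∈ (c s).support := Finsupp.mem_support_iff.mpr hne
      have := Finset.le_sup (f := id) hmem
      simp only [id] at this
      omega)
  refine ⟨g, hg, ?_⟩
  intro g' hg'
  have hz : ∑ i : Fin r, Polynomial.aeval X ((g' - g) i) * ι (a i) = 0 := by
    have e : ∀ i ∈ Finset.univ, Polynomial.aeval X ((g' - g) i) * ι (a i)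
        = Polynomial.aeval X (g' i) * ι (a i) - Polynomial.aeval X (g i) * ι (a i) := by
      intro i _; rw [Pi.sub_apply, map_sub, sub_mul]
    rw [Finset.sum_congr rfl e, Finset.sum_sub_distrib, ← hg, ← hg', sub_self]
  have hd : ∀ i, ((g' - g) i).natDegree
      ≤ Finset.univ.sup (fun i => ((g' - g) i).natDegree) :=
    fun i => Finset.le_sup (f := fun i => ((g' - g) i).natDegree) (Finset.mem_univ i)
  have hzero := ore_inj σ ι X c δ hc hX r a _ (g' - g) hd hz
  funext i
  have hi := hzero i
  rw [Pi.sub_apply] at hi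
  exact sub_eq_zero.mp hi
end

section
/- Let A be a finite dimensional F-algebra and ε : A → F a Frobenius functional (an F-linear map whose kernel contains no nonzero right ideal). Define α_ε : S → S* = Hom(S_R, R_R) (where S = A[x;σ,δ], R = F[x]) as the right S-linear map with α_ε(1)(Σ f_i x^i) = Σ ε(f_i) x^i. Then α_ε is injective. -/
section OreAux

variable {F : Type*} [Field F] {A : Type*} [Ring A] [Algebra F A]
  {S : Type*} [Ring S] [Algebra F S]

/-- representation map -/
def orem (ι : A →ₐ[F] S) (X : S) (g : ℕ →₀ A) : S := g.sum fun n f => ι f * X ^ n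

variable (ι : A →ₐ[F] S) (X : S) (c : S ≃ₗ[F] (ℕ →₀ A))

lemma c_orem (hc : ∀ s : S, s = orem ι X (c s)) (g : ℕ →₀ A) :
    c (orem ι X g) = g := by
  obtain ⟨s, rfl⟩ := c.surjective g
  rw [← hc s]

lemma c_single (hc : ∀ s : S, s = orem ι X (c s)) (a : A) (n : ℕ) :
    c (ι a * X ^ n) = Finsupp.single n a := by
  have h : ι a * X ^ n = orem ι X (Finsupp.single n a) := by
    rw [orem, Finsupp.sum_single_index]
    simp
  rw [h, c_orem ι X c hc]

end OreAux

section OreAux2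

variable {F : Type*} [Field F] {A : Type*} [Ring A] [Algebra F A]
  {S : Type*} [Ring S] [Algebra F S]
  (σ : A ≃ₐ[F] A) (δ : A →ₗ[F] A) (ι : A →ₐ[F] S) (X : S)
  (c : S ≃ₗ[F] (ℕ →₀ A))

lemma c_mul_low (hc : ∀ s : S, s = orem ι X (c s)) {n : ℕ} {r : S}
    (hr : ∀ k, n ≤ k → c r k = 0) (f : A) :
    ∀ k, n ≤ k → c (ι f * r) k = 0 := by
  intro k hk
  have h1 : ι f * r = (c r).sum fun i h => ι (f * h) * X ^ i := by
    conv_lhs => rw [hc r, orem, Finsupp.mul_sum]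
    exact Finsupp.sum_congr fun i _ => by rw [← mul_assoc, ← map_mul]
  rw [h1, map_finsuppSum, Finsupp.sum_apply, Finsupp.sum]
  apply Finset.sum_eq_zero
  intro i hi
  have hin : i < n := by
    by_contra h
    exact (Finsupp.mem_support_iff.mp hi) (hr i (le_of_not_gt h))
  rw [c_single ι X c hc, Finsupp.single_apply, if_neg (by omega)]

lemma c_X_low (hX : ∀ a : A, X * ι a = ι (σ a) * X + ι (δ a))
    (hc : ∀ s : S, s = orem ι X (c s)) {n : ℕ} {r : S}
    (hr : ∀ k, n ≤ k → c r k = 0) :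
    ∀ k, n + 1 ≤ k → c (X * r) k = 0 := by
  intro k hk
  have h1 : X * r = (c r).sum fun i h => ι (σ h) * X ^ (i + 1) + ι (δ h) * X ^ i := by
    conv_lhs => rw [hc r, orem, Finsupp.mul_sum]
    refine Finsupp.sum_congr fun i _ => ?_
    rw [← mul_assoc, hX, add_mul, mul_assoc, ← pow_succ']
  rw [h1, map_finsuppSum, Finsupp.sum_apply, Finsupp.sum]
  apply Finset.sum_eq_zero
  intro i hi
  have hin : i < n := by
    by_contra h
    exact (Finsupp.mem_support_iff.mp hi) (hr i (le_of_not_gt h))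
  rw [map_add, Finsupp.add_apply, c_single ι X c hc, c_single ι X c hc,
    Finsupp.single_apply, Finsupp.single_apply, if_neg (by omega), if_neg (by omega),
    add_zero]

lemma comm_pow (hX : ∀ a : A, X * ι a = ι (σ a) * X + ι (δ a))
    (hc : ∀ s : S, s = orem ι X (c s)) (a : A) (n : ℕ) :
    ∃ r : S, X ^ n * ι a = ι ((σ ^ n) a) * X ^ n + r ∧ ∀ k, n ≤ k → c r k = 0 := by
  induction n with
  | zero => exact ⟨0, by simp, by simp⟩
  | succ n ih =>
    obtain ⟨r, hr1, hr2⟩ := ih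
    refine ⟨ι (δ ((σ ^ n) a)) * X ^ n + X * r, ?_, ?_⟩
    · have : X ^ (n + 1) * ι a = X * (X ^ n * ι a) := by
        rw [pow_succ', mul_assoc]
      rw [this, hr1, mul_add, ← mul_assoc, hX, add_mul, mul_assoc, ← pow_succ']
      have hσ : σ ((σ ^ n) a) = (σ ^ (n + 1)) a := by
        rw [pow_succ']; rfl
      rw [hσ, add_assoc]
    · intro k hk
      rw [map_add, Finsupp.add_apply, c_single ι X c hc, Finsupp.single_apply,
        if_neg (by omega), c_X_low σ δ ι X c hX hc hr2 k hk, add_zero]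

end OreAux2

section OreAux3

variable {F : Type*} [Field F] {A : Type*} [Ring A] [Algebra F A]
  {S : Type*} [Ring S] [Algebra F S]
  (σ : A ≃ₐ[F] A) (δ : A →ₗ[F] A) (ι : A →ₐ[F] S) (X : S)
  (c : S ≃ₗ[F] (ℕ →₀ A))

lemma top_coeff (hX : ∀ a : A, X * ι a = ι (σ a) * X + ι (δ a))
    (hc : ∀ s : S, s = orem ι X (c s)) (d : S) (j : ℕ)
    (hd : ∀ j', j < j' → c d j' = 0) (a : A) :
    c (d * ι a) j = c d j * ((σ ^ j) a) := by
  classical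
  choose r hr1 hr2 using fun i => comm_pow σ δ ι X c hX hc a i
  have h1 : d * ι a = (c d).sum fun i f => ι (f * (σ ^ i) a) * X ^ i + ι f * r i := by
    conv_lhs => rw [hc d, orem, Finsupp.sum_mul]
    refine Finsupp.sum_congr fun i _ => ?_
    rw [mul_assoc, hr1 i, mul_add, ← mul_assoc, ← map_mul]
  rw [h1, map_finsuppSum, Finsupp.sum_apply, Finsupp.sum]
  rw [Finset.sum_congr rfl (g := fun i => if i = j then c d i * (σ ^ i) a else 0)
    (fun i hi => ?_)]
  · rw [Finset.sum_ite_eq' (c d).support j (fun i => c d i * (σ ^ i) a)]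
    by_cases hj : j ∈ (c d).support
    · rw [if_pos hj]
    · rw [if_neg hj, Finsupp.notMem_support_iff.mp hj, zero_mul]
  · have hij : i ≤ j := by
      by_contra h
      exact (Finsupp.mem_support_iff.mp hi) (hd i (lt_of_not_ge h))
    rw [map_add, Finsupp.add_apply, c_single ι X c hc, Finsupp.single_apply,
      c_mul_low ι X c hc (hr2 i) (c d i) j hij, add_zero]

lemma coeff_sum_eps (ε : A →ₗ[F] F) (g : ℕ →₀ A) (k : ℕ) :
    ((g.sum fun n f => (Polynomial.monomial n (ε f) : Polynomial F)).coeff k) = ε (g k) := by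
  rw [Finsupp.sum, Polynomial.finset_sum_coeff]
  rw [Finset.sum_congr rfl fun n _ => Polynomial.coeff_monomial]
  rw [Finset.sum_ite_eq' g.support k (fun n => ε (g n))]
  by_cases hk : k ∈ g.support
  · rw [if_pos hk]
  · rw [if_neg hk, Finsupp.notMem_support_iff.mp hk, map_zero]

end OreAux3

/-- for a Frobenius functional `ε : A → F` (an `F`-linear map whose kernel
contains no nonzero right ideal, expressed via principal right ideals), the right
`S`-linear map `α_ε : S → S* = Hom(S_R, R_R)` determined by
`α_ε(1)(∑ f_i x^i) = ∑ ε(f_i) x^i` is injective.  Since `α_ε(s)(u) = α_ε(1)(s*u)`,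
injectivity is expressed through the coefficientwise application of `ε`. -/
theorem ore_alpha_injective
    (F : Type*) [Field F] (A : Type*) [Ring A] [Algebra F A] [FiniteDimensional F A]
    (σ : A ≃ₐ[F] A) (δ : A →ₗ[F] A)
    (hder : ∀ a b : A, δ (a * b) = σ a * δ b + δ a * b)
    (S : Type*) [Ring S] [Algebra F S]
    (ι : A →ₐ[F] S) (X : S)
    (hX : ∀ a : A, X * ι a = ι (σ a) * X + ι (δ a))
    (c : S ≃ₗ[F] (ℕ →₀ A))
    (hc : ∀ s : S, s = (c s).sum fun n f => ι f * X ^ n)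
    (ε : A →ₗ[F] F)
    (hker : ∀ f : A, (∀ u : A, ε (f * u) = 0) → f = 0) :
    ∀ s t : S,
      (∀ u : S,
        ((c (s * u)).sum fun n f => (Polynomial.monomial n (ε f) : Polynomial F)) =
          (c (t * u)).sum fun n f => (Polynomial.monomial n (ε f) : Polynomial F)) →
      s = t := by
  intro s t h
  have hc' : ∀ s : S, s = orem ι X (c s) := hc
  have hkey : ∀ (u : S) (k : ℕ), ε ((c ((s - t) * u)) k) = 0 := by
    intro u k
    have h2 := congrArg (fun p : Polynomial F => p.coeff k) (h u)
    simp only [coeff_sum_eps] at h2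
    rw [sub_mul, map_sub, Finsupp.sub_apply, map_sub, h2, sub_self]
  set d := s - t with hdd
  have hB : ∀ j, (c d).support.sup id + 1 ≤ j → c d j = 0 := by
    intro j hj
    by_contra hne
    have := Finset.le_sup (f := id) (Finsupp.mem_support_iff.mpr hne)
    simp only [id] at this
    omega
  set B := (c d).support.sup id + 1 with hBdef
  have hQ : ∀ k j, B ≤ j + k → c d j = 0 := by
    intro k
    induction k with
    | zero => intro j hj; exact hB j (by omega)
    | succ k ih =>
      intro j hj
      by_cases h' : B ≤ j + k
      · exact ih j h'
      · have htop : ∀ j', j < j' → c d j' = 0 := fun j' hj' => ih j' (by omega)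
        apply hker
        intro u
        have h3 := top_coeff σ δ ι X c hX hc' d j htop ((σ ^ j).symm u)
        rw [AlgEquiv.apply_symm_apply] at h3
        have h4 := hkey (ι ((σ ^ j).symm u)) j
        rw [h3] at h4
        exact h4
  have hcd : c d = 0 := by
    ext j
    simp [hQ B j (by omega)]
  have hd0 : d = 0 := by
    have := c.map_eq_zero_iff.mp hcd
    exact this
  exact sub_eq_zero.mp hd0
end

section
/- A right S-module isomorphism α : S → S* corresponding to a Frobenius functional ε (via α(a)(b)-type evaluation, with α determined by α(1)(Σf_i x^i) = Σ ε(f_i)x^i) is additionally left R-linear if and only if ε ∘ σ = ε and ε ∘ δ = 0. -/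
/-- let `α : S → S*` be the right `S`-module isomorphism corresponding
to a Frobenius functional `ε` (so `α 1` applies `ε` coefficientwise).  Then `α` is
additionally left `R`-linear — `α (r(X) * s) (u) = r * α s (u)`, for the left
`R`-module structure `(r χ)(u) = r * χ(u)` on `S*` — if and only if `ε ∘ σ = ε`
and `ε ∘ δ = 0`. -/
theorem ore_alpha_left_linear_iff
    (F : Type*) [Field F] (A : Type*) [Ring A] [Algebra F A] [FiniteDimensional F A]
    (σ : A ≃ₐ[F] A) (δ : A →ₗ[F] A)
    (hder : ∀ a b : A, δ (a * b) = σ a * δ b + δ a * b)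
    (S : Type*) [Ring S] [Algebra F S]
    (ι : A →ₐ[F] S) (X : S)
    (hX : ∀ a : A, X * ι a = ι (σ a) * X + ι (δ a))
    (c : S ≃ₗ[F] (ℕ →₀ A))
    (hc : ∀ s : S, s = (c s).sum fun n f => ι f * X ^ n)
    (ε : A →ₗ[F] F)
    (hker : ∀ f : A, (∀ u : A, ε (f * u) = 0) → f = 0)
    (α : S → {χ : S →ₗ[F] Polynomial F //
        ∀ (u : S) (r : Polynomial F), χ (u * Polynomial.aeval X r) = χ u * r})
    (hbij : Function.Bijective α)
    (hadd : ∀ s t : S, (α (s + t)).1 = (α s).1 + (α t).1)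
    (hmulS : ∀ s t u : S, (α (s * t)).1 u = (α s).1 (t * u))
    (hα1 : ∀ s : S, (α 1).1 s = (c s).sum fun n f => (Polynomial.monomial n (ε f) : Polynomial F)) :
    (∀ (r : Polynomial F) (s u : S),
        (α (Polynomial.aeval X r * s)).1 u = r * (α s).1 u) ↔
      ((∀ a : A, ε (σ a) = ε a) ∧ (∀ a : A, ε (δ a) = 0)) := by
  classical
  set χ : S →ₗ[F] Polynomial F := (α 1).1 with hχdef
  -- α in terms of χ
  have hαχ : ∀ s u : S, (α s).1 u = χ (s * u) := by
    intro s u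
    have := hmulS 1 s u
    rw [one_mul] at this
    rw [this, hχdef]
  -- c of the standard sum
  have hcg : ∀ t : ℕ →₀ A, c (t.sum fun n f => ι f * X ^ n) = t := by
    intro t
    have h1 := hc (c.symm t)
    rw [c.apply_symm_apply] at h1
    rw [← h1, c.apply_symm_apply]
  -- χ on basis elements
  have hχb : ∀ (f : A) (n : ℕ), χ (ι f * X ^ n) = Polynomial.monomial n (ε f) := by
    intro f n
    have h1 : (Finsupp.single n f).sum (fun n f => ι f * X ^ n) = ι f * X ^ n := by
      rw [Finsupp.sum_single_index]
      rw [map_zero, zero_mul]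
    have h2 : c (ι f * X ^ n) = Finsupp.single n f := by
      rw [← h1, hcg]
    rw [hχdef, hα1, h2, Finsupp.sum_single_index]
    rw [map_zero, Polynomial.monomial_zero_right]
  -- multiplication rule
  have hXmul : ∀ (f : A) (n : ℕ),
      X * (ι f * X ^ n) = ι (σ f) * X ^ (n + 1) + ι (δ f) * X ^ n := by
    intro f n
    rw [← mul_assoc, hX, add_mul, mul_assoc, ← pow_succ']
  constructor
  · intro h
    have key : ∀ v : S, χ (X * v) = Polynomial.X * χ v := by
      intro v
      have := h Polynomial.X 1 v
      rw [Polynomial.aeval_X, mul_one, hαχ, hαχ, one_mul] at this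
      exact this
    have main : ∀ f : A, (Polynomial.monomial 1 (ε (σ f)) : Polynomial F)
        + Polynomial.monomial 0 (ε (δ f)) = Polynomial.monomial 1 (ε f) := by
      intro f
      have := key (ι f * X ^ 0)
      rw [hXmul, map_add, hχb, hχb, hχb, Polynomial.X_mul_monomial] at this
      exact this
    constructor
    · intro a
      have h0 := congrArg (fun p => Polynomial.coeff p 1) (main a)
      simpa using h0
    · intro a
      have h0 := congrArg (fun p => Polynomial.coeff p 0) (main a)
      simpa using h0
  · rintro ⟨hσ, hδ⟩
    have key : ∀ v : S, χ (X * v) = Polynomial.X * χ v := by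
      intro v
      conv_lhs => rw [hc v]
      conv_rhs => rw [hc v]
      rw [Finsupp.mul_sum, map_finsuppSum, map_finsuppSum, Finsupp.mul_sum]
      refine Finsupp.sum_congr ?_
      intro n _
      rw [hXmul, map_add, hχb, hχb, hχb, hσ, hδ, Polynomial.monomial_zero_right,
        add_zero, Polynomial.X_mul_monomial]
    have keyR : ∀ (r : Polynomial F) (v : S),
        χ (Polynomial.aeval X r * v) = r * χ v := by
      intro r
      induction r using Polynomial.induction_on with
      | C a =>
          intro v
          rw [Polynomial.aeval_C, ← Algebra.smul_def, map_smul,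
            Polynomial.smul_eq_C_mul]
      | add p q hp hq =>
          intro v
          rw [map_add, add_mul, map_add, add_mul, hp, hq]
      | monomial n a ih =>
          intro v
          have hr : (Polynomial.C a * Polynomial.X ^ (n + 1) : Polynomial F)
              = Polynomial.X * (Polynomial.C a * Polynomial.X ^ n) := by ring
          rw [hr, _root_.map_mul (Polynomial.aeval X), Polynomial.aeval_X, mul_assoc, key, ih, ← mul_assoc]
    intro r s u
    rw [hαχ (Polynomial.aeval X r * s) u, hαχ s u, mul_assoc, keyR]
end

section
/- Let p be prime, n > 1, τ the Frobenius automorphism of F_{p^n} (τ(x)=x^p), and α ∈ F_{p^n} a normal element (so {α, τ(α), ..., τ^{n-1}(α)} is an F_p-basis). Define the τ-derivation δ(b) = (τ(b) − b)·α/(τ(α) − α). Then every F_p-linear functional ε : F_{p^n} → F_p satisfying ε∘τ = ε and ε∘δ = 0 is zero. -/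
/-- let `p` be prime, `n > 1`, `K = F_{p^n}` with Frobenius
automorphism `τ(x) = x^p`, and `α` a normal element (so `α, τ α, …, τ^{n-1} α`,
i.e. `α^{p^i}` for `i < n`, form an `F_p`-basis of `K`).  For the `τ`-derivation
`δ(b) = (τ(b) - b) · α / (τ(α) - α)`, every `F_p`-linear functional `ε` with
`ε ∘ τ = ε` and `ε ∘ δ = 0` is zero. -/
theorem galois_field_no_compatible_functional
    (p n : ℕ) [Fact p.Prime] (hn : 1 < n)
    (α : GaloisField p n)
    (hα : ∀ x : GaloisField p n,
      ∃! g : Fin n → ZMod p, x = ∑ i : Fin n, g i • α ^ p ^ (i : ℕ))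
    (ε : GaloisField p n →ₗ[ZMod p] ZMod p)
    (hσ : ∀ b : GaloisField p n, ε (b ^ p) = ε b)
    (hδ : ∀ b : GaloisField p n, ε ((b ^ p - b) * α / (α ^ p - α)) = 0) :
    ε = 0 := by
  -- First: α^p ≠ α, otherwise the representation in `hα` is not unique.
  have hne : α ^ p - α ≠ 0 := by
    intro h
    have hap : α ^ p = α := by linear_combination h
    have hpow : ∀ i : ℕ, α ^ p ^ i = α := by
      intro i
      induction i with
      | zero => simp
      | succ k ih => rw [pow_succ, pow_mul, ih, hap]
    obtain ⟨g, hg, hguniq⟩ := hα α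
    have h0 : (⟨0, by omega⟩ : Fin n) ≠ ⟨1, hn⟩ := by
      intro h
      have := congrArg Fin.val h
      simp at this
    have key : ∀ j : Fin n,
        α = ∑ i : Fin n, (if i = j then (1 : ZMod p) else 0) • α ^ p ^ (i : ℕ) := by
      intro j
      rw [Finset.sum_eq_single j]
      · simp [hpow]
      · intro b _ hb; simp [hb]
      · intro h; simp at h
    have e0 := hguniq _ (key ⟨0, by omega⟩)
    have e1 := hguniq _ (key ⟨1, hn⟩)
    have heq : (fun i : Fin n => if i = (⟨0, by omega⟩ : Fin n) then (1 : ZMod p) else 0)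
        = fun i : Fin n => if i = ⟨1, hn⟩ then (1 : ZMod p) else 0 := e0.trans e1.symm
    have := congrFun heq ⟨0, by omega⟩
    simp [h0] at this
  -- ε α = 0
  have hεα : ε α = 0 := by
    have := hδ α
    rwa [mul_div_cancel_left₀ _ hne] at this
  -- ε (α ^ p ^ i) = 0 for all i
  have hpows : ∀ i : ℕ, ε (α ^ p ^ i) = 0 := by
    intro i
    induction i with
    | zero => simpa using hεα
    | succ k ih => rw [pow_succ, pow_mul, hσ]; exact ih
  ext x
  obtain ⟨g, hg, -⟩ := hα x
  simp only [hg, map_sum, map_smul, hpows, smul_zero, Finset.sum_const_zero,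
    LinearMap.zero_apply]
end

section
/- Let C ⊆ B be a ring extension, σ an automorphism of B with σ(C) ⊆ C, and δ a σ-derivation of B with δ(C) ⊆ C. If ξ : B → C is a C-bimodule morphism with ξσ = σξ, ξδ = δξ and ξ(1) = 1, then the map ξ̂ : B[x;σ,δ] → C[x;σ,δ] defined by ξ̂(Σ b_i x^i) = Σ ξ(b_i) x^i is a C[x;σ,δ]-bimodule morphism with ξ̂(1) = 1; hence the extension C[x;σ,δ] ⊆ B[x;σ,δ] is split. -/
/-- let `C ⊆ B` be a ring extension, `σ` an automorphism of `B`
preserving `C` and `δ` a `σ`-derivation preserving `C`.  Given a `C`-bimodule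
morphism `ξ : B → C` with `ξσ = σξ`, `ξδ = δξ` and `ξ 1 = 1`, the coefficientwise
extension `ξ̂(∑ b_i x^i) = ∑ ξ(b_i) x^i` of `ξ` to the Ore extension
`B[x;σ,δ]` (presented via `ι`, `X` and the coefficient isomorphism `c`) is a
`C[x;σ,δ]`-bimodule morphism with `ξ̂ 1 = 1` which restricts to the identity on
`C[x;σ,δ]` (the subring of elements with all coefficients in `C`); hence the
extension `C[x;σ,δ] ⊆ B[x;σ,δ]` is split. -/
theorem ore_split_lifting
    (B : Type*) [Ring B] (C : Subring B)
    (σ : B ≃+* B) (hσC : ∀ x ∈ C, σ x ∈ C)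
    (δ : B →+ B) (hder : ∀ a b : B, δ (a * b) = σ a * δ b + δ a * b)
    (hδC : ∀ x ∈ C, δ x ∈ C)
    (ξ : B →+ B) (hξC : ∀ b : B, ξ b ∈ C)
    (hξl : ∀ x ∈ C, ∀ b : B, ξ (x * b) = x * ξ b)
    (hξr : ∀ x ∈ C, ∀ b : B, ξ (b * x) = ξ b * x)
    (hξσ : ∀ b : B, ξ (σ b) = σ (ξ b))
    (hξδ : ∀ b : B, ξ (δ b) = δ (ξ b))
    (hξ1 : ξ 1 = 1)
    (SB : Type*) [Ring SB] (ι : B →+* SB) (X : SB)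
    (hX : ∀ b : B, X * ι b = ι (σ b) * X + ι (δ b))
    (c : SB ≃+ (ℕ →₀ B))
    (hc : ∀ s : SB, s = (c s).sum fun n b => ι b * X ^ n) :
    ∃ Ξ : SB →+ SB,
      (∀ s : SB, c (Ξ s) = Finsupp.mapRange (⇑ξ) ξ.map_zero (c s)) ∧
      Ξ 1 = 1 ∧
      (∀ t s : SB, (∀ n : ℕ, c t n ∈ C) →
        Ξ (t * s) = t * Ξ s ∧ Ξ (s * t) = Ξ s * t) ∧
      (∀ t : SB, (∀ n : ℕ, c t n ∈ C) → Ξ t = t) := by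
  classical
  -- the inverse of `c` is the evaluation map
  have csymm : ∀ g : ℕ →₀ B, c.symm g = g.sum fun n b => ι b * X ^ n := by
    intro g
    have h := hc (c.symm g)
    rwa [c.apply_symm_apply] at h
  have csymm_single : ∀ (n : ℕ) (b : B), c.symm (Finsupp.single n b) = ι b * X ^ n := by
    intro n b
    rw [csymm, Finsupp.sum_single_index (by simp)]
  have ceval : ∀ (n : ℕ) (b : B), c (ι b * X ^ n) = Finsupp.single n b := by
    intro n b
    rw [← csymm_single, c.apply_symm_apply]
  set Ξ : SB →+ SB :=
    (c.symm.toAddMonoidHom.comp ((Finsupp.mapRange.addMonoidHom ξ).comp c.toAddMonoidHom))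
    with hΞ
  have Ξdef : ∀ s, Ξ s = c.symm (Finsupp.mapRange (⇑ξ) ξ.map_zero (c s)) := by
    intro s
    simp [hΞ, Finsupp.mapRange.addMonoidHom]
  have prop1 : ∀ s, c (Ξ s) = Finsupp.mapRange (⇑ξ) ξ.map_zero (c s) := by
    intro s; rw [Ξdef, c.apply_symm_apply]
  have Ξgen : ∀ (n : ℕ) (b : B), Ξ (ι b * X ^ n) = ι (ξ b) * X ^ n := by
    intro n b
    rw [Ξdef, ceval, Finsupp.mapRange_single, csymm_single]
  have Ξι : ∀ b : B, Ξ (ι b) = ι (ξ b) := by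
    intro b
    have := Ξgen 0 b
    simpa using this
  -- induction principle for SB
  have ind : ∀ (P : SB → Prop), P 0 → (∀ u v, P u → P v → P (u + v)) →
      (∀ (n : ℕ) (b : B), P (ι b * X ^ n)) → ∀ s, P s := by
    intro P h0 hadd hgen s
    suffices h : ∀ g : ℕ →₀ B, P (g.sum fun n b => ι b * X ^ n) by
      have := h (c s); rwa [← hc s] at this
    intro g
    induction g using Finsupp.induction with
    | zero => simpa using h0
    | single_add n b g hn hb ih =>
        rw [Finsupp.sum_add_index' (by simp) (by intros; rw [map_add, add_mul]),
          Finsupp.sum_single_index (by simp)]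
        exact hadd _ _ (hgen n b) ih
  have ξfix : ∀ x ∈ C, ξ x = x := by
    intro x hx
    have := hξl x hx 1
    simpa [hξ1] using this
  have Ξone : Ξ 1 = 1 := by
    have h1 : (1 : SB) = ι 1 * X ^ 0 := by simp
    rw [h1, Ξgen, hξ1]
  -- right multiplication by X
  have rX : ∀ s, Ξ (s * X) = Ξ s * X := by
    refine ind _ (by simp) (fun u v hu hv => by rw [add_mul, map_add, hu, hv, map_add, add_mul]) ?_
    intro n b
    rw [mul_assoc, ← pow_succ, Ξgen, Ξgen, mul_assoc, pow_succ]
  -- expansion of `X * (ι b * X ^ n)`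
  have expand : ∀ (b : B) (n : ℕ),
      X * (ι b * X ^ n) = ι (σ b) * X ^ (n + 1) + ι (δ b) * X ^ n := by
    intro b n
    rw [← mul_assoc, hX, add_mul, mul_assoc, ← pow_succ']
  -- left multiplication by X
  have lX : ∀ s, Ξ (X * s) = X * Ξ s := by
    refine ind _ (by simp) (fun u v hu hv => by rw [mul_add, map_add, hu, hv, map_add, mul_add]) ?_
    intro n b
    rw [expand, map_add, Ξgen, Ξgen, Ξgen, expand, hξσ, hξδ]
  -- right multiplication by ι a, a ∈ C, on generators
  have rCgen : ∀ (n : ℕ), ∀ a ∈ C, ∀ b : B,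
      Ξ (ι b * X ^ n * ι a) = Ξ (ι b * X ^ n) * ι a := by
    intro n
    induction n with
    | zero =>
        intro a ha b
        simp only [pow_zero, mul_one]
        rw [← map_mul, Ξι, Ξι, hξr a ha b, map_mul]
    | succ n ih =>
        intro a ha b
        have key : ∀ b' : B, ι b' * X ^ (n + 1) * ι a
            = ι b' * X ^ n * ι (σ a) * X + ι b' * X ^ n * ι (δ a) := by
          intro b'
          rw [pow_succ, ← mul_assoc, mul_assoc (ι b' * X ^ n) X (ι a), hX, mul_add,
            ← mul_assoc (ι b' * X ^ n) (ι (σ a)) X]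
        rw [key b, map_add, rX, ih (σ a) (hσC a ha) b, ih (δ a) (hδC a ha) b,
          Ξgen, Ξgen (n + 1), key (ξ b)]
  have rC : ∀ a ∈ C, ∀ s, Ξ (s * ι a) = Ξ s * ι a := by
    intro a ha
    refine ind _ (by simp) (fun u v hu hv => by rw [add_mul, map_add, hu, hv, map_add, add_mul]) ?_
    intro n b
    exact rCgen n a ha b
  have lC : ∀ a ∈ C, ∀ s, Ξ (ι a * s) = ι a * Ξ s := by
    intro a ha
    refine ind _ (by simp) (fun u v hu hv => by rw [mul_add, map_add, hu, hv, map_add, mul_add]) ?_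
    intro n b
    rw [← mul_assoc, ← map_mul, Ξgen, Ξgen, hξl a ha b, map_mul, mul_assoc]
  have lXpow : ∀ (n : ℕ) (s : SB), Ξ (X ^ n * s) = X ^ n * Ξ s := by
    intro n
    induction n with
    | zero => intro s; simp
    | succ n ih =>
        intro s
        rw [pow_succ', mul_assoc, lX, ih, ← mul_assoc]
  have rXpow : ∀ (n : ℕ) (s : SB), Ξ (s * X ^ n) = Ξ s * X ^ n := by
    intro n
    induction n with
    | zero => intro s; simp
    | succ n ih =>
        intro s
        rw [pow_succ, ← mul_assoc, rX, ih s, mul_assoc, ← pow_succ]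
  refine ⟨Ξ, prop1, Ξone, ?_, ?_⟩
  · intro t s ht
    constructor
    · have h1 : t * s = (c t).sum fun n b => ι b * X ^ n * s := by
        conv_lhs => rw [hc t]
        rw [Finsupp.sum_mul]
      rw [h1, map_finsuppSum]
      have h2 : ((c t).sum fun n b => Ξ (ι b * X ^ n * s))
          = (c t).sum fun n b => ι b * X ^ n * Ξ s := by
        refine Finsupp.sum_congr fun n hn => ?_
        rw [mul_assoc, lC _ (ht n), lXpow, ← mul_assoc]
      rw [h2, ← Finsupp.sum_mul, ← hc t]
    · have h1 : s * t = (c t).sum fun n b => s * (ι b * X ^ n) := by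
        conv_lhs => rw [hc t]
        rw [Finsupp.mul_sum]
      rw [h1, map_finsuppSum]
      have h2 : ((c t).sum fun n b => Ξ (s * (ι b * X ^ n)))
          = (c t).sum fun n b => Ξ s * (ι b * X ^ n) := by
        refine Finsupp.sum_congr fun n hn => ?_
        rw [← mul_assoc, rXpow, rC _ (ht n), mul_assoc]
      rw [h2, ← Finsupp.mul_sum, ← hc t]
  · intro t ht
    apply c.injective
    rw [prop1]
    ext n
    rw [Finsupp.mapRange_apply]
    exact ξfix _ (ht n)
end

section
/- If there exists an F-linear map ξ : A → F with ξ(1) = 1, ξ∘σ = ξ and ξ∘δ = 0, then the extension F[x] ⊆ A[x;σ,δ] is split, i.e. the inclusion F[x] → A[x;σ,δ] splits as an F[x]-bimodule morphism. -/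
open Polynomial

section OreAux

variable {F : Type*} [Field F] {A : Type*} [Ring A] [Algebra F A]
  {S : Type*} [Ring S] [Algebra F S]

noncomputable def oreL (ι : A →ₐ[F] S) (X : S) : (ℕ →₀ A) →ₗ[F] S :=
  Finsupp.lsum F fun n => (LinearMap.mulRight F (X ^ n)).comp ι.toLinearMap

@[simp] lemma oreL_single (ι : A →ₐ[F] S) (X : S) (n : ℕ) (a : A) :
    oreL ι X (Finsupp.single n a) = ι a * X ^ n := by
  simp [oreL]

noncomputable def oreP (ξ : A →ₗ[F] F) : (ℕ →₀ A) →ₗ[F] Polynomial F :=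
  Finsupp.lsum F fun n => (Polynomial.monomial n).comp ξ

@[simp] lemma oreP_single (ξ : A →ₗ[F] F) (n : ℕ) (a : A) :
    oreP ξ (Finsupp.single n a) = Polynomial.monomial n (ξ a) := by
  simp [oreP]

noncomputable def oreShift (F A : Type*) [Field F] [Ring A] [Algebra F A] :
    (ℕ →₀ A) →ₗ[F] (ℕ →₀ A) :=
  Finsupp.lmapDomain A F (· + 1)

@[simp] lemma oreShift_single (n : ℕ) (a : A) :
    oreShift F A (Finsupp.single n a) = Finsupp.single (n + 1) a := by
  simp [oreShift, Finsupp.mapDomain_single]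

end OreAux

/-- if there is an `F`-linear map `ξ : A → F` with `ξ 1 = 1`,
`ξ ∘ σ = ξ` and `ξ ∘ δ = 0`, then the extension `F[x] ⊆ A[x;σ,δ]` is split: the
inclusion `r ↦ r(X)` of `F[x]` into `S` admits an additive retraction
`Ξ : S → F[x]` which is an `F[x]`-bimodule morphism. -/
theorem ore_split
    (F : Type*) [Field F] (A : Type*) [Ring A] [Algebra F A] [FiniteDimensional F A]
    (σ : A ≃ₐ[F] A) (δ : A →ₗ[F] A)
    (hder : ∀ a b : A, δ (a * b) = σ a * δ b + δ a * b)
    (S : Type*) [Ring S] [Algebra F S]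
    (ι : A →ₐ[F] S) (X : S)
    (hX : ∀ a : A, X * ι a = ι (σ a) * X + ι (δ a))
    (c : S ≃ₗ[F] (ℕ →₀ A))
    (hc : ∀ s : S, s = (c s).sum fun n f => ι f * X ^ n)
    (ξ : A →ₗ[F] F) (hξ1 : ξ 1 = 1)
    (hξσ : ∀ a : A, ξ (σ a) = ξ a)
    (hξδ : ∀ a : A, ξ (δ a) = 0) :
    ∃ Ξ : S →+ Polynomial F,
      (∀ (r : Polynomial F) (s : S), Ξ (Polynomial.aeval X r * s) = r * Ξ s) ∧
      (∀ (s : S) (r : Polynomial F), Ξ (s * Polynomial.aeval X r) = Ξ s * r) ∧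
      (∀ r : Polynomial F, Ξ (Polynomial.aeval X r) = r) := by
  classical
  set L : (ℕ →₀ A) →ₗ[F] S := oreL ι X with hLdef
  have hLs : ∀ s : S, L (c s) = s := by
    intro s
    conv_rhs => rw [hc s]
    simp only [hLdef, oreL, Finsupp.lsum_apply]
    rfl
  have hcL : ∀ f : ℕ →₀ A, c (L f) = f := by
    intro f
    have h1 : L f = c.symm f := by
      have := hLs (c.symm f); simpa using this
    rw [h1, c.apply_symm_apply]
  set P : (ℕ →₀ A) →ₗ[F] Polynomial F := oreP ξ with hPdef
  set mσ : (ℕ →₀ A) →ₗ[F] (ℕ →₀ A) := Finsupp.mapRange.linearMap σ.toLinearMap with hmσ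
  set mδ : (ℕ →₀ A) →ₗ[F] (ℕ →₀ A) := Finsupp.mapRange.linearMap δ with hmδ
  -- X * L f = L (mδ f + shift (mσ f))
  have hXL : (LinearMap.mulLeft F X).comp L = L.comp (mδ + (oreShift F A).comp mσ) := by
    apply Finsupp.lhom_ext
    intro n a
    simp only [LinearMap.comp_apply, LinearMap.mulLeft_apply, LinearMap.add_apply,
      hLdef, hmσ, hmδ, Finsupp.mapRange.linearMap_apply, Finsupp.mapRange_single,
      oreShift_single, map_add, oreL_single]
    rw [← mul_assoc, hX a, add_mul, mul_assoc, ← pow_succ']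
    simp only [AlgEquiv.toLinearMap_apply]
    exact add_comm _ _
  -- L (shift f) = L f * X
  have hLsh : L.comp (oreShift F A) = (LinearMap.mulRight F X).comp L := by
    apply Finsupp.lhom_ext
    intro n a
    simp only [LinearMap.comp_apply, LinearMap.mulRight_apply, oreShift_single,
      hLdef, oreL_single]
    rw [pow_succ, mul_assoc]
  have hPδ : P.comp mδ = 0 := by
    apply Finsupp.lhom_ext
    intro n a
    simp [hPdef, hmδ, hξδ]
  have hPσsh : P.comp ((oreShift F A).comp mσ) =
      (LinearMap.mulLeft F (Polynomial.X : Polynomial F)).comp P := by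
    apply Finsupp.lhom_ext
    intro n a
    simp [hPdef, hmσ, hξσ, Polynomial.X_mul_monomial]
  have hPsh : P.comp (oreShift F A) =
      (LinearMap.mulLeft F (Polynomial.X : Polynomial F)).comp P := by
    apply Finsupp.lhom_ext
    intro n a
    simp [hPdef, Polynomial.X_mul_monomial]
  set Ξl : S →ₗ[F] Polynomial F := P.comp (c : S →ₗ[F] (ℕ →₀ A)) with hΞl
  have ΞlX : ∀ s : S, Ξl (X * s) = Polynomial.X * Ξl s := by
    intro s
    have h1 : X * s = L ((mδ + (oreShift F A).comp mσ) (c s)) := by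
      conv_lhs => rw [← hLs s]
      exact congrFun (congrArg (fun g => g.toFun) hXL) (c s)
    have h2 : c (X * s) = (mδ + (oreShift F A).comp mσ) (c s) := by
      rw [h1, hcL]
    simp only [hΞl, LinearMap.comp_apply, LinearEquiv.coe_coe, h2, map_add,
      LinearMap.add_apply]
    have e1 : P (mδ (c s)) = 0 := by
      have := congrFun (congrArg (fun g => g.toFun) hPδ) (c s); simpa using this
    have e2 : P ((oreShift F A) (mσ (c s))) = Polynomial.X * P (c s) := by
      have := congrFun (congrArg (fun g => g.toFun) hPσsh) (c s); simpa using this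
    rw [e1, e2, zero_add]
  have ΞlXr : ∀ s : S, Ξl (s * X) = Ξl s * Polynomial.X := by
    intro s
    have h1 : s * X = L ((oreShift F A) (c s)) := by
      conv_lhs => rw [← hLs s]
      exact (congrFun (congrArg (fun g => g.toFun) hLsh) (c s)).symm
    have h2 : c (s * X) = (oreShift F A) (c s) := by rw [h1, hcL]
    have e2 : P ((oreShift F A) (c s)) = Polynomial.X * P (c s) := by
      have := congrFun (congrArg (fun g => g.toFun) hPsh) (c s); simpa using this
    simp only [hΞl, LinearMap.comp_apply, LinearEquiv.coe_coe, h2, e2]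
    ring
  -- main properties
  have prop1 : ∀ (r : Polynomial F) (s : S),
      Ξl (Polynomial.aeval X r * s) = r * Ξl s := by
    intro r
    induction r using Polynomial.induction_on with
    | C a =>
      intro s
      rw [Polynomial.aeval_C, ← Algebra.smul_def, map_smul, Polynomial.smul_eq_C_mul]
    | add p q hp hq =>
      intro s
      rw [map_add, add_mul, map_add, hp, hq, add_mul]
    | monomial n a ih =>
      intro s
      have : Polynomial.aeval X (Polynomial.C a * Polynomial.X ^ (n + 1)) * s
          = Polynomial.aeval X (Polynomial.C a * Polynomial.X ^ n) * (X * s) := by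
        simp only [map_mul, Polynomial.aeval_C, Polynomial.aeval_X_pow, pow_succ,
          Polynomial.aeval_X]
        simp [mul_assoc]
      rw [this, ih (X * s), ΞlX s]
      ring
  have prop2 : ∀ (s : S) (r : Polynomial F),
      Ξl (s * Polynomial.aeval X r) = Ξl s * r := by
    intro s r
    induction r using Polynomial.induction_on with
    | C a =>
      rw [Polynomial.aeval_C, ← Algebra.commutes, ← Algebra.smul_def, map_smul,
        Polynomial.smul_eq_C_mul]
      ring
    | add p q hp hq =>
      rw [map_add, mul_add, map_add, hp, hq, mul_add]
    | monomial n a ih =>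
      have : s * Polynomial.aeval X (Polynomial.C a * Polynomial.X ^ (n + 1))
          = (s * Polynomial.aeval X (Polynomial.C a * Polynomial.X ^ n)) * X := by
        simp only [map_mul, Polynomial.aeval_C, Polynomial.aeval_X_pow, pow_succ,
          Polynomial.aeval_X]
        simp [mul_assoc]
      rw [this, ΞlXr, ih]
      ring
  have Ξl1 : Ξl 1 = 1 := by
    have hc1 : c (1 : S) = Finsupp.single 0 1 := by
      have : L (Finsupp.single 0 (1 : A)) = 1 := by simp [hLdef]
      calc c (1 : S) = c (L (Finsupp.single 0 1)) := by rw [this]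
        _ = Finsupp.single 0 1 := hcL _
    simp [hΞl, hc1, hPdef, hξ1, Polynomial.monomial_zero_one]
  refine ⟨Ξl.toAddMonoidHom, ?_, ?_, ?_⟩
  · exact prop1
  · exact prop2
  · intro r
    have := prop1 r 1
    simpa [Ξl1] using this
end

section
/- If C ⊆ B is a separable ring extension admitting a separability element p ∈ B⊗_C B with σ⊗(p) = p and δ⊗(p) = 0, then C[x;σ,δ] ⊆ B[x;σ,δ] is separable, where σ⊗(b₁⊗b₂) = σ(b₁)⊗σ(b₂) and δ⊗(b₁⊗b₂) = σ(b₁)⊗δ(b₂) + δ(b₁)⊗b₂. -/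
/-- if `C ⊆ B` is a separable ring extension with a separability
element `p ∈ B ⊗_C B` satisfying `σ⊗(p) = p` and `δ⊗(p) = 0`, then
`C[x;σ,δ] ⊆ B[x;σ,δ]` is separable.  The tensor products `T = B ⊗_C B` and
`T' = SB ⊗_{SC} SB` (where `SB = B[x;σ,δ]` and `SC = C[x;σ,δ]` is the subring of
elements all of whose coefficients lie in `C`) are axiomatized by biadditive
balanced maps `tp`, `tp'` generating them, together with the left/right
multiplication actions `l, r, l', r'`, the multiplication maps `μ, μ'`, the maps
`σ⊗ = σT`, `δ⊗ = δT` on `T`, and the canonical map `j : T → T'` induced by `ι`.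
A separability element for the Ore extension is produced from `p`. -/
theorem ore_separable_lifting
    (B : Type*) [Ring B] (C : Subring B)
    (σ : B ≃+* B) (hσC : ∀ x ∈ C, σ x ∈ C)
    (δ : B →+ B) (hder : ∀ a b : B, δ (a * b) = σ a * δ b + δ a * b)
    (hδC : ∀ x ∈ C, δ x ∈ C)
    (SB : Type*) [Ring SB] (ι : B →+* SB) (X : SB)
    (hX : ∀ b : B, X * ι b = ι (σ b) * X + ι (δ b))
    (c : SB ≃+ (ℕ →₀ B))
    (hc : ∀ s : SB, s = (c s).sum fun n b => ι b * X ^ n)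
    -- the tensor product T = B ⊗_C B
    (T : Type*) [AddCommGroup T] (tp : B →+ B →+ T)
    (hbal : ∀ (b b' : B), ∀ x ∈ C, tp (b * x) b' = tp b (x * b'))
    (hTspan : AddSubgroup.closure {t : T | ∃ b b', t = tp b b'} = ⊤)
    (l r : B → T →+ T)
    (hl : ∀ b u v : B, l b (tp u v) = tp (b * u) v)
    (hr : ∀ b u v : B, r b (tp u v) = tp u (v * b))
    (μ : T →+ B) (hμ : ∀ u v : B, μ (tp u v) = u * v)
    (σT δT : T →+ T)
    (hσT : ∀ u v : B, σT (tp u v) = tp (σ u) (σ v))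
    (hδT : ∀ u v : B, δT (tp u v) = tp (σ u) (δ v) + tp (δ u) v)
    -- the tensor product T' = SB ⊗_{SC} SB
    (T' : Type*) [AddCommGroup T'] (tp' : SB →+ SB →+ T')
    (hbal' : ∀ (s s' w : SB), (∀ n : ℕ, c w n ∈ C) → tp' (s * w) s' = tp' s (w * s'))
    (hT'span : AddSubgroup.closure {t : T' | ∃ s s', t = tp' s s'} = ⊤)
    (l' r' : SB → T' →+ T')
    (hl' : ∀ s u v : SB, l' s (tp' u v) = tp' (s * u) v)
    (hr' : ∀ s u v : SB, r' s (tp' u v) = tp' u (v * s))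
    (μ' : T' →+ SB) (hμ' : ∀ u v : SB, μ' (tp' u v) = u * v)
    (j : T →+ T') (hj : ∀ u v : B, j (tp u v) = tp' (ι u) (ι v))
    -- the separability element
    (p : T) (hp : ∀ b : B, l b p = r b p) (hp1 : μ p = 1)
    (hpσ : σT p = p) (hpδ : δT p = 0) :
    ∃ q : T', (∀ s : SB, l' s q = r' s q) ∧ μ' q = 1 := by
  classical
  -- extension principles from generators
  have extT : ∀ (F G : T →+ T'), (∀ u v : B, F (tp u v) = G (tp u v)) → F = G := by
    intro F G h
    exact AddMonoidHom.eq_of_eqOn_dense hTspan (by rintro t ⟨u, v, rfl⟩; exact h u v)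
  have extTS : ∀ (F G : T →+ SB), (∀ u v : B, F (tp u v) = G (tp u v)) → F = G := by
    intro F G h
    exact AddMonoidHom.eq_of_eqOn_dense hTspan (by rintro t ⟨u, v, rfl⟩; exact h u v)
  have extT' : ∀ (F G : T' →+ T'), (∀ u v : SB, F (tp' u v) = G (tp' u v)) → F = G := by
    intro F G h
    exact AddMonoidHom.eq_of_eqOn_dense hT'span (by rintro t ⟨u, v, rfl⟩; exact h u v)
  -- coefficients
  have hcsum : ∀ d : ℕ →₀ B, c (d.sum fun n b => ι b * X ^ n) = d := by
    intro d
    obtain ⟨s, rfl⟩ := c.surjective d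
    rw [← hc s]
  have hXC : ∀ n, c X n ∈ C := by
    have hX1 : c X = Finsupp.single 1 (1 : B) := by
      have h := hcsum (Finsupp.single 1 (1 : B))
      rwa [Finsupp.sum_single_index (by simp), map_one, pow_one, one_mul] at h
    intro n
    rw [hX1, Finsupp.single_apply]
    split
    · exact C.one_mem
    · exact C.zero_mem
  -- algebraic identities for l', r'
  have ladd : ∀ (s₁ s₂ : SB) (t : T'), l' (s₁ + s₂) t = l' s₁ t + l' s₂ t := by
    intro s₁ s₂
    have := extT' (l' (s₁ + s₂)) (l' s₁ + l' s₂) (by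
      intro u v; simp only [AddMonoidHom.add_apply, hl', add_mul, map_add])
    intro t; rw [this]; rfl
  have radd : ∀ (s₁ s₂ : SB) (t : T'), r' (s₁ + s₂) t = r' s₁ t + r' s₂ t := by
    intro s₁ s₂
    have := extT' (r' (s₁ + s₂)) (r' s₁ + r' s₂) (by
      intro u v; simp only [AddMonoidHom.add_apply, hr', mul_add, map_add])
    intro t; rw [this]; rfl
  have lzero : ∀ t : T', l' 0 t = 0 := by
    intro t
    have := extT' (l' 0) 0 (by intro u v; simp [hl'])
    rw [this]; rfl
  have rzero : ∀ t : T', r' 0 t = 0 := by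
    intro t
    have := extT' (r' 0) 0 (by intro u v; simp [hr'])
    rw [this]; rfl
  have lmul : ∀ (s₁ s₂ : SB) (t : T'), l' (s₁ * s₂) t = l' s₁ (l' s₂ t) := by
    intro s₁ s₂
    have := extT' (l' (s₁ * s₂)) ((l' s₁).comp (l' s₂)) (by
      intro u v; simp [hl', mul_assoc])
    intro t; rw [this]; rfl
  have rmul : ∀ (s₁ s₂ : SB) (t : T'), r' (s₁ * s₂) t = r' s₂ (r' s₁ t) := by
    intro s₁ s₂
    have := extT' (r' (s₁ * s₂)) ((r' s₂).comp (r' s₁)) (by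
      intro u v; simp [hr', mul_assoc])
    intro t; rw [this]; rfl
  have lrcomm : ∀ (s₁ s₂ : SB) (t : T'), l' s₁ (r' s₂ t) = r' s₂ (l' s₁ t) := by
    intro s₁ s₂
    have := extT' ((l' s₁).comp (r' s₂)) ((r' s₂).comp (l' s₁)) (by
      intro u v; simp [hl', hr'])
    intro t; exact DFunLike.congr_fun this t
  have lone : ∀ t : T', l' 1 t = t := by
    intro t
    have := extT' (l' 1) (AddMonoidHom.id T') (by intro u v; simp [hl'])
    rw [this]; rfl
  have rone : ∀ t : T', r' 1 t = t := by
    intro t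
    have := extT' (r' 1) (AddMonoidHom.id T') (by intro u v; simp [hr'])
    rw [this]; rfl
  -- j intertwines the actions
  have jl : ∀ (b : B) (t : T), j (l b t) = l' (ι b) (j t) := by
    intro b
    have := extT (j.comp (l b)) ((l' (ι b)).comp j) (by
      intro u v; simp [hl, hj, hl', map_mul])
    intro t; exact DFunLike.congr_fun this t
  have jr : ∀ (b : B) (t : T), j (r b t) = r' (ι b) (j t) := by
    intro b
    have := extT (j.comp (r b)) ((r' (ι b)).comp j) (by
      intro u v; simp [hr, hj, hr', map_mul])
    intro t; exact DFunLike.congr_fun this t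
  have jμ : ∀ t : T, μ' (j t) = ι (μ t) := by
    have := extTS (μ'.comp j) ((ι : B →+ SB).comp μ) (by
      intro u v; simp [hj, hμ', hμ, map_mul])
    intro t; exact DFunLike.congr_fun this t
  -- the key identity for X
  have hL : ∀ u v : B, l' X (tp' (ι u) (ι v)) =
      tp' (ι (σ u)) (ι (σ v) * X) + (tp' (ι (σ u)) (ι (δ v)) + tp' (ι (δ u)) (ι v)) := by
    intro u v
    rw [hl', hX u, map_add, AddMonoidHom.add_apply, hbal' (ι (σ u)) (ι v) X hXC, hX v, map_add]
    abel
  have jX : ∀ t : T, l' X (j t) = r' X (j (σT t)) + j (δT t) := by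
    have := extT ((l' X).comp j) (((r' X).comp (j.comp σT)) + j.comp δT) (by
      intro u v
      simp only [AddMonoidHom.comp_apply, AddMonoidHom.add_apply, hσT, hδT, map_add, hj,
        hr', hL u v])
    intro t; exact DFunLike.congr_fun this t
  refine ⟨j p, ?_, by rw [jμ, hp1, map_one]⟩
  -- commutation with generators
  have keyι : ∀ b : B, l' (ι b) (j p) = r' (ι b) (j p) := by
    intro b; rw [← jl, hp b, jr]
  have keyX : l' X (j p) = r' X (j p) := by
    rw [jX, hpσ, hpδ, map_zero, add_zero]
  have keymul : ∀ s₁ s₂ : SB, l' s₁ (j p) = r' s₁ (j p) → l' s₂ (j p) = r' s₂ (j p) →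
      l' (s₁ * s₂) (j p) = r' (s₁ * s₂) (j p) := by
    intro s₁ s₂ h₁ h₂
    rw [lmul, h₂, lrcomm, h₁, ← rmul]
  have keypow : ∀ n : ℕ, l' (X ^ n) (j p) = r' (X ^ n) (j p) := by
    intro n
    induction n with
    | zero => simp [lone, rone]
    | succ n ih => rw [pow_succ]; exact keymul _ _ ih keyX
  intro s
  rw [hc s]
  generalize c s = d
  induction d using Finsupp.induction with
  | zero => rw [Finsupp.sum_zero_index, lzero, rzero]
  | single_add n b d hnd hb ih =>
    rw [Finsupp.sum_add_index (fun _ _ => by simp) (fun _ _ _ _ => by rw [map_add, add_mul]),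
      Finsupp.sum_single_index (by simp), ladd, radd, ih,
      keymul _ _ (keyι b) (keypow n)]
end

section
/- Let A = M₂(F₈) where F₈ = F₂(a) with a³ + a² + 1 = 0, let σ be the entrywise Frobenius automorphism X ↦ (x_{ij}²), and δ(X) = MX − σ(X)M where M = diag(0, a). Then every F₂-linear map ε : A → F₂ satisfying ε∘σ = ε and ε∘δ = 0 vanishes on all matrices with zero first column; in particular the kernel of any such ε contains the nonzero left ideal J = {(0 c₂; 0 c₃) : c₂,c₃ ∈ F₈}, so no such ε is a Frobenius functional. -/
open Matrix

lemma aux_map_sq (i j : Fin 2) (c : GaloisField 2 3) :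
    (single i j c).map (fun x => x * x) = single i j (c * c) := by
  ext i' j'
  simp only [Matrix.map_apply, single, of_apply]
  split <;> simp

lemma aux_pow8 (x : GaloisField 2 3) : x ^ 8 = x := by
  haveI : Fintype (GaloisField 2 3) := Fintype.ofFinite _
  have h := FiniteField.pow_card x
  have hc : Fintype.card (GaloisField 2 3) = 8 := by
    rw [← Nat.card_eq_fintype_card, GaloisField.card 2 3 (by norm_num)]
    norm_num
  rwa [hc] at h

lemma aux_sub (i j : Fin 2) (c d : GaloisField 2 3) :
    single i j (c - d) = single i j c - single i j d := by
  ext i' j'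
  simp only [single, of_apply, Matrix.sub_apply]
  split <;> simp

/-- let `A = M₂(F₈)` with `F₈ = F₂(a)`, `a³ + a² + 1 = 0`, `σ` the
entrywise Frobenius automorphism `X ↦ (x_{ij}²)` and `δ(X) = M X - σ(X) M` with
`M = diag(0, a)`.  Every `F₂`-linear `ε : A → F₂` with `ε ∘ σ = ε` and `ε ∘ δ = 0`
vanishes on all matrices with zero first column; in particular the kernel of `ε`
contains the nonzero left ideal `J` of such matrices, and no such `ε` is a
Frobenius functional (its kernel contains a nonzero right ideal as well). -/
theorem matrix_no_compatible_frobenius_functional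
    (a : GaloisField 2 3) (ha : a ^ 3 + a ^ 2 + 1 = 0)
    (ε : Matrix (Fin 2) (Fin 2) (GaloisField 2 3) →ₗ[ZMod 2] ZMod 2)
    (hεσ : ∀ Y : Matrix (Fin 2) (Fin 2) (GaloisField 2 3),
      ε (Y.map fun x => x * x) = ε Y)
    (hεδ : ∀ Y : Matrix (Fin 2) (Fin 2) (GaloisField 2 3),
      ε (Matrix.single 1 1 a * Y -
          (Y.map fun x => x * x) * Matrix.single 1 1 a) = 0) :
    (∀ Y : Matrix (Fin 2) (Fin 2) (GaloisField 2 3),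
      (∀ i, Y i 0 = 0) → ε Y = 0) ∧
    (∀ Y : Matrix (Fin 2) (Fin 2) (GaloisField 2 3),
      (∀ i, Y i 0 = 0) → ∀ u, ε (u * Y) = 0) ∧
    ¬ (∀ f : Matrix (Fin 2) (Fin 2) (GaloisField 2 3),
        (∀ u, ε (f * u) = 0) → f = 0) := by
  have h2 : (2 : GaloisField 2 3) = 0 := CharTwo.two_eq_zero
  have ha0 : a ≠ 0 := by
    rintro rfl
    simp at ha
  -- ε vanishes on single 0 1
  have g0 : ∀ x, ε (single 0 1 x) = 0 := by
    intro x
    have key := hεδ (single 0 1 ((x * a⁻¹) ^ 4))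
    rw [aux_map_sq, single_mul_single_of_ne (c := a) (i := 1) (j := 1) (k := 0) (one_ne_zero : (1 : Fin 2) ≠ 0),
        single_mul_single_same] at key
    have hx : (x * a⁻¹) ^ 4 * (x * a⁻¹) ^ 4 * a = x := by
      have h8 : (x * a⁻¹) ^ 8 = x * a⁻¹ := aux_pow8 _
      have hr : (x * a⁻¹) ^ 4 * (x * a⁻¹) ^ 4 * a = (x * a⁻¹) ^ 8 * a := by ring
      rw [hr, h8, mul_assoc, inv_mul_cancel₀ ha0, mul_one]
    rw [zero_sub, map_neg, neg_eq_zero, hx] at key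
    exact key
  -- ε vanishes on single 1 0
  have h0 : ∀ x, ε (single 1 0 x) = 0 := by
    intro x
    have key := hεδ (single 1 0 (a⁻¹ * x))
    rw [aux_map_sq, single_mul_single_same,
        single_mul_single_of_ne _ (1 : Fin 2) (0 : Fin 2) (1 : Fin 2) (zero_ne_one : (0 : Fin 2) ≠ 1)] at key
    rw [sub_zero] at key
    have hx : a * (a⁻¹ * x) = x := by field_simp
    rwa [hx] at key
  -- squares invariance on (1,1)
  have fsq : ∀ c, ε (single 1 1 (c * c)) = ε (single 1 1 c) := by
    intro c
    have := hεσ (single 1 1 c)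
    rwa [aux_map_sq] at this
  -- delta on (1,1)
  have fδ : ∀ c, ε (single 1 1 (a * c - c * c * a)) = 0 := by
    intro c
    have key := hεδ (single 1 1 c)
    rwa [aux_map_sq, single_mul_single_same, single_mul_single_same,
        ← aux_sub] at key
  -- ε (E11 1) = 0
  have f1 : ε (single 1 1 1) = 0 := by
    have := fδ a
    have hv : a * a - a * a * a = 1 := by
      linear_combination ha - (a ^ 3 + 1) * h2
    rwa [hv] at this
  -- ε (E11 x) = 0 for all x
  have f0 : ∀ x, ε (single 1 1 x) = 0 := by
    intro x
    have h8 := aux_pow8 x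
    have hfx2 : ε (single 1 1 (x ^ 2)) = ε (single 1 1 x) := by
      have := fsq x; rwa [← pow_two] at this
    have hfx4 : ε (single 1 1 (x ^ 4)) = ε (single 1 1 x) := by
      have := fsq (x ^ 2)
      rw [← pow_add] at this
      norm_num at this
      rw [this, hfx2]
    have ht : ε (single 1 1 (x + x ^ 2 + x ^ 4)) = ε (single 1 1 x) := by
      rw [single_add, single_add, map_add, map_add, hfx2, hfx4]
      have : ε (single 1 1 x) + ε (single 1 1 x) = 0 :=
        CharTwo.add_self_eq_zero _
      rw [add_assoc, this, add_zero]
    have htt : (x + x ^ 2 + x ^ 4) * (x + x ^ 2 + x ^ 4) = x + x ^ 2 + x ^ 4 := by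
      linear_combination h8 + (x ^ 3 + x ^ 5 + x ^ 6) * h2
    have hcases : x + x ^ 2 + x ^ 4 = 0 ∨ x + x ^ 2 + x ^ 4 = 1 := by
      rcases mul_eq_zero.mp (by linear_combination htt :
          (x + x ^ 2 + x ^ 4) * ((x + x ^ 2 + x ^ 4) - 1) = 0) with h | h
      · exact Or.inl h
      · exact Or.inr (by linear_combination h)
    rcases hcases with h | h
    · rw [← ht, h]; simp
    · rw [← ht, h, f1]
  -- main part 1
  have part1 : ∀ Y : Matrix (Fin 2) (Fin 2) (GaloisField 2 3),
      (∀ i, Y i 0 = 0) → ε Y = 0 := by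
    intro Y hY
    have hdecomp : Y = single 0 1 (Y 0 1) + single 1 1 (Y 1 1) := by
      ext i j
      fin_cases i <;> fin_cases j <;>
        simp [single, hY 0, hY 1]
    rw [hdecomp, map_add, g0, f0, add_zero]
  refine ⟨part1, ?_, ?_⟩
  · intro Y hY u
    apply part1
    intro i
    simp [Matrix.mul_apply, hY]
  · intro H
    have hne := H (single 1 0 1) ?_
    · have := congrFun (congrFun hne 1) 0
      simp [single] at this
    · intro u
      have hdecomp : single 1 0 (1 : GaloisField 2 3) * u =
          single 1 0 (u 0 0) + single 1 1 (u 0 1) := by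
        ext i j
        fin_cases i <;> fin_cases j <;>
          simp [Matrix.mul_apply, single, Fin.sum_univ_two]
      rw [hdecomp, map_add, h0, f0, add_zero]
end

section
/- With A = M₂(F₈), σ the entrywise Frobenius automorphism, and δ(X) = MX − σ(X)M for M = diag(0,a), the F₂-linear map ξ : A → F₂ determined on the basis {a^{2^i} e_j} by ξ(a^{2^i} e₀) = 1 and ξ(a^{2^i} e_j) = 0 for j = 1,2,3 satisfies ξ(1) = 1, ξ∘σ = ξ, and ξ∘δ = 0. -/
namespace MSF17

local notation "F" => GaloisField 2 3

noncomputable def Lmap (i j : Fin 2) :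
    F →ₗ[ZMod 2] Matrix (Fin 2) (Fin 2) F where
  toFun x := Matrix.single i j x
  map_add' x y := Matrix.single_add i j x y
  map_smul' c x := (Matrix.smul_single c i j x).symm

lemma two_eq_zero : (2 : F) = 0 := by
  exact_mod_cast CharP.cast_eq_zero F 2

lemma zmod2_cases (c : ZMod 2) : c = 0 ∨ c = 1 := by revert c; decide

@[simp] lemma Lmap_apply (i j : Fin 2) (x : F) :
    Lmap i j x = Matrix.single i j x := rfl

noncomputable def frobL : F →ₗ[ZMod 2] F where
  toFun x := x * x
  map_add' x y := by
    have h2 := two_eq_zero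
    linear_combination x * y * h2
  map_smul' c x := by
    rcases zmod2_cases c with rfl | rfl <;> simp

lemma basis_key (a : F) (ha : a ^ 3 + a ^ 2 + 1 = 0)
    (f g : F →ₗ[ZMod 2] ZMod 2)
    (e1 : f 1 = g 1) (e2 : f a = g a) (e3 : f (a ^ 2) = g (a ^ 2)) :
    ∀ x, f x = g x := by
  have h2 := two_eq_zero
  have li : LinearIndependent (ZMod 2) ![(1 : F), a, a ^ 2] := by
    rw [Fintype.linearIndependent_iff]
    intro c hc
    have h0 := zmod2_cases (c 0)
    have h1 := zmod2_cases (c 1)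
    have hh2 := zmod2_cases (c 2)
    simp only [Fin.sum_univ_three, Matrix.cons_val_zero, Matrix.cons_val_one,
      Matrix.head_cons, Matrix.cons_val_two, Matrix.tail_cons] at hc
    rcases h0 with hc0 | hc0 <;> rcases h1 with hc1 | hc1 <;> rcases hh2 with hc2 | hc2 <;>
      rw [hc0, hc1, hc2] at hc <;>
      simp only [one_smul, zero_smul, add_zero, zero_add, smul_eq_mul] at hc
    · intro i; fin_cases i <;> simp [hc0, hc1, hc2]
    · exact absurd (by linear_combination ha - (a + 1) * hc : (1 : F) = 0) one_ne_zero
    · exact absurd (by linear_combination ha - (a ^ 2 + a) * hc : (1 : F) = 0) one_ne_zero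
    · exact absurd (by linear_combination ha - a * hc : (1 : F) = 0) one_ne_zero
    · exact absurd hc one_ne_zero
    · exact absurd (by linear_combination (a ^ 2 + a + 1) * hc - a * ha - a ^ 2 * h2 :
        (1 : F) = 0) one_ne_zero
    · exact absurd (by linear_combination ha - a ^ 2 * hc : (1 : F) = 0) one_ne_zero
    · exact absurd (by linear_combination (a + 2) * ha + (1 - a ^ 2 - 2 * a) * hc - h2 :
        (1 : F) = 0) one_ne_zero
  have hcard : Fintype.card (Fin 3) = Module.finrank (ZMod 2) F := by
    rw [GaloisField.finrank 2 (by norm_num)]; simp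
  have hfg : f = g := by
    apply (basisOfLinearIndependentOfCardEqFinrank li hcard).ext
    intro i
    rw [coe_basisOfLinearIndependentOfCardEqFinrank]
    fin_cases i
    · simpa using e1
    · simpa using e2
    · simpa using e3
  exact fun x => by rw [hfg]

@[simp] lemma frobL_apply (x : F) : frobL x = x * x := rfl

end MSF17

/-- with `A = M₂(F₈)`, `σ` the entrywise Frobenius automorphism and
`δ(X) = M X - σ(X) M` for `M = diag(0, a)`, the `F₂`-linear map `ξ : A → F₂`
determined on the basis `{a^{2^i} e_j}` by `ξ(a^{2^i} e₀) = 1` and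
`ξ(a^{2^i} e_j) = 0` for `j = 1, 2, 3` satisfies `ξ 1 = 1`, `ξ ∘ σ = ξ` and
`ξ ∘ δ = 0`. -/
theorem matrix_split_functional
    (a : GaloisField 2 3) (ha : a ^ 3 + a ^ 2 + 1 = 0)
    (ξ : Matrix (Fin 2) (Fin 2) (GaloisField 2 3) →ₗ[ZMod 2] ZMod 2)
    (h0 : ∀ i : Fin 3, ξ (Matrix.single 0 0 (a ^ 2 ^ (i : ℕ))) = 1)
    (h1 : ∀ i : Fin 3, ξ (Matrix.single 0 1 (a ^ 2 ^ (i : ℕ))) = 0)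
    (h2 : ∀ i : Fin 3, ξ (Matrix.single 1 0 (a ^ 2 ^ (i : ℕ))) = 0)
    (h3 : ∀ i : Fin 3, ξ (Matrix.single 1 1 (a ^ 2 ^ (i : ℕ))) = 0) :
    ξ 1 = 1 ∧
    (∀ Y : Matrix (Fin 2) (Fin 2) (GaloisField 2 3),
      ξ (Y.map fun x => x * x) = ξ Y) ∧
    (∀ Y : Matrix (Fin 2) (Fin 2) (GaloisField 2 3),
      ξ (Matrix.single 1 1 a * Y -
          (Y.map fun x => x * x) * Matrix.single 1 1 a) = 0) := by
  have htwo := MSF17.two_eq_zero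
  have ha1 : ξ (Matrix.single 0 0 a) = 1 := by simpa using h0 0
  have ha2 : ξ (Matrix.single 0 0 (a ^ 2)) = 1 := by simpa using h0 1
  have ha4 : ξ (Matrix.single 0 0 (a ^ 4)) = 1 := by simpa using h0 2
  have hone : a + a ^ 2 + a ^ 4 = 1 := by linear_combination (a - 1) * ha + a ^ 2 * htwo
  have hT1 : ξ (Matrix.single 0 0 (1 : GaloisField 2 3)) = 1 := by
    rw [← hone, Matrix.single_add, Matrix.single_add, map_add, map_add,
      ha1, ha2, ha4]
    decide
  -- vanishing on the (0,1), (1,0), (1,1) slots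
  have V : ∀ (i j : Fin 2), (i, j) ≠ (0, 0) →
      (∀ k : Fin 3, ξ (Matrix.single i j (a ^ 2 ^ (k : ℕ))) = 0) →
      ∀ x, ξ (Matrix.single i j x) = 0 := by
    intro i j _ hk
    have hka : ξ (Matrix.single i j a) = 0 := by simpa using hk 0
    have hka2 : ξ (Matrix.single i j (a ^ 2)) = 0 := by simpa using hk 1
    have hka4 : ξ (Matrix.single i j (a ^ 4)) = 0 := by simpa using hk 2
    have hk1 : ξ (Matrix.single i j (1 : GaloisField 2 3)) = 0 := by
      rw [← hone, Matrix.single_add, Matrix.single_add, map_add, map_add,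
        hka, hka2, hka4]
      decide
    exact MSF17.basis_key a ha (ξ.comp (MSF17.Lmap i j)) 0 (by simpa using hk1)
      (by simpa using hka) (by simpa using hka2)
  have V01 := V 0 1 (by decide) h1
  have V10 := V 1 0 (by decide) h2
  have V11 := V 1 1 (by decide) h3
  have collapse : ∀ Z : Matrix (Fin 2) (Fin 2) (GaloisField 2 3),
      ξ Z = ξ (Matrix.single 0 0 (Z 0 0)) := by
    intro Z
    conv_lhs => rw [Matrix.matrix_eq_sum_single Z]
    simp [Fin.sum_univ_two, V01, V10, V11]
  have hfrob : ∀ x, ξ (Matrix.single 0 0 (x * x)) = ξ (Matrix.single 0 0 x) := by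
    have := MSF17.basis_key a ha ((ξ.comp (MSF17.Lmap 0 0)).comp MSF17.frobL)
      (ξ.comp (MSF17.Lmap 0 0))
      (by simp [hT1]) (by simp [← pow_two, ha1, ha2])
      (by simpa [show a ^ 2 * a ^ 2 = a ^ 4 by ring, ha2, ha4] using rfl)
    intro x; simpa using this x
  refine ⟨?_, ?_, ?_⟩
  · rw [collapse 1]
    simpa using hT1
  · intro Y
    rw [collapse (Y.map fun x => x * x), collapse Y, Matrix.map_apply]
    exact hfrob (Y 0 0)
  · intro Y
    rw [collapse]
    have hz : ((Matrix.single 1 1 a * Y -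
        (Y.map fun x => x * x) * Matrix.single 1 1 a :
        Matrix (Fin 2) (Fin 2) (GaloisField 2 3))) 0 0 = 0 := by
      simp [Matrix.sub_apply, Matrix.mul_apply, Fin.sum_univ_two, Matrix.single]
    rw [hz]
    simp
end

section
/- With A = M₂(F₈), σ the entrywise Frobenius automorphism, and δ(X) = MX − σ(X)M for M = diag(0,a), the element p = Σ_{i=0}^{2} (a^{2^i} E₁₁) ⊗ (a^{2^i} E₁₁) + Σ_{i=0}^{2} (a^{2^i} E₂₁) ⊗ (a^{2^i} E₁₂) ∈ A ⊗_{F₂} A is a separability element of A over F₂ (i.e. Xp = pX for all X ∈ A and μ(p) = 1) that satisfies σ⊗(p) = p and δ⊗(p) = 0. -/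
open scoped TensorProduct

set_option maxHeartbeats 1000000

/-- `A = M₂(F₈)`, as a 12-dimensional `F₂`-algebra. -/
noncomputable abbrev MatF8 : Type := Matrix (Fin 2) (Fin 2) (GaloisField 2 3)

/-- The entrywise Frobenius automorphism `σ : X ↦ (x_{ij}²)` of `M₂(F₈)`. -/
noncomputable def frobM (Y : MatF8) : MatF8 := Y.map fun x => x * x

/-- The matrix `M = diag(0, a)`. -/
noncomputable def diagM (a : GaloisField 2 3) : MatF8 := Matrix.single 1 1 a

/-- The inner `σ`-derivation `δ(X) = M X - σ(X) M`. -/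
noncomputable def delM (a : GaloisField 2 3) (Y : MatF8) : MatF8 :=
  diagM a * Y - frobM Y * diagM a

/-- The basis elements `a^{2^i} E_{kl}` of `M₂(F₈)` over `F₂`. -/
noncomputable def sbm (a : GaloisField 2 3) (k l : Fin 2) (i : Fin 3) : MatF8 :=
  Matrix.single k l (a ^ 2 ^ (i : ℕ))

open Matrix

abbrev K : Type := GaloisField 2 3

lemma hK2 : (2 : K) = 0 := by exact_mod_cast CharP.cast_eq_zero K 2

lemma frobE (k l : Fin 2) (c : K) :
    frobM (single k l c) = single k l (c * c) := by
  ext i j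
  simp only [frobM, Matrix.map_apply, Matrix.single, Matrix.of_apply]
  split_ifs <;> simp

lemma Ymul00 (Y : MatF8) (c : K) :
    Y * single (0 : Fin 2) (0 : Fin 2) c =
      single 0 0 (Y 0 0 * c) + single 1 0 (Y 1 0 * c) := by
  ext i j
  fin_cases i <;> fin_cases j <;>
    simp [Matrix.mul_apply, Matrix.single, Fin.sum_univ_two, mul_comm]

lemma Ymul10 (Y : MatF8) (c : K) :
    Y * single (1 : Fin 2) (0 : Fin 2) c =
      single 0 0 (Y 0 1 * c) + single 1 0 (Y 1 1 * c) := by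
  ext i j
  fin_cases i <;> fin_cases j <;>
    simp [Matrix.mul_apply, Matrix.single, Fin.sum_univ_two, mul_comm]

lemma mul00Y (Y : MatF8) (c : K) :
    single (0 : Fin 2) (0 : Fin 2) c * Y =
      single 0 0 (Y 0 0 * c) + single 0 1 (Y 0 1 * c) := by
  ext i j
  fin_cases i <;> fin_cases j <;>
    simp [Matrix.mul_apply, Matrix.single, Fin.sum_univ_two, mul_comm]

lemma mul01Y (Y : MatF8) (c : K) :
    single (0 : Fin 2) (1 : Fin 2) c * Y =
      single 0 0 (Y 1 0 * c) + single 0 1 (Y 1 1 * c) := by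
  ext i j
  fin_cases i <;> fin_cases j <;>
    simp [Matrix.mul_apply, Matrix.single, Fin.sum_univ_two, mul_comm]

lemma d00 (a : K) (c : K) : delM a (single 0 0 c) = 0 := by
  simp [delM, diagM, frobE]

lemma d10 (a : K) (c : K) :
    delM a (single 1 0 c) = single 1 0 (a * c) := by
  simp [delM, diagM, frobE]

lemma d01 (a : K) (c : K) :
    delM a (single 0 1 c) = single 0 1 (a * (c * c)) := by
  have z1 : single (1 : Fin 2) (1 : Fin 2) a * single (0 : Fin 2) (1 : Fin 2) c
      = (0 : MatF8) := by simp
  have z2 : single (0 : Fin 2) (1 : Fin 2) (c * c) * single (1 : Fin 2) (1 : Fin 2) a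
      = single (0 : Fin 2) (1 : Fin 2) (c * c * a) := by simp
  rw [delM, diagM, frobE, z1, z2, zero_sub]
  ext i j
  simp only [Matrix.neg_apply, Matrix.single, Matrix.of_apply]
  split_ifs <;> [skip; simp]
  linear_combination (-(a * (c * c))) * hK2

lemma negTensor (x : MatF8 ⊗[ZMod 2] MatF8) : -x = x := by
  have h : (-1 : ZMod 2) = 1 := by decide
  rw [← one_smul (ZMod 2) x, ← neg_smul, h]


lemma htr (y : K) : y + y ^ 2 + y ^ 4 = 0 ∨ y + y ^ 2 + y ^ 4 = 1 := by
  haveI : Fintype K := Fintype.ofFinite K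
  have hc : Fintype.card K = 8 := by
    have h := GaloisField.card 2 3 (by norm_num)
    rw [← Nat.card_eq_fintype_card]; simpa using h
  have h8 : y ^ 8 = y := by have := FiniteField.pow_card y; rwa [hc] at this
  have h2 : (2 : K) = 0 := hK2
  have hsq : (y + y ^ 2 + y ^ 4) * ((y + y ^ 2 + y ^ 4) - 1) = 0 := by
    linear_combination h8 + (y ^ 3 + y ^ 5 + y ^ 6) * h2
  rcases mul_eq_zero.mp hsq with h | h
  · exact Or.inl h
  · exact Or.inr (sub_eq_zero.mp h)

lemma comm3 (a : K) (ha : a ^ 3 + a ^ 2 + 1 = 0) (b : K) (k l m n : Fin 2) :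
    ∑ i : Fin 3, single k l (b * a ^ 2 ^ (i : ℕ)) ⊗ₜ[ZMod 2] single m n (a ^ 2 ^ (i : ℕ)) =
    ∑ i : Fin 3, single k l (a ^ 2 ^ (i : ℕ)) ⊗ₜ[ZMod 2] single m n (b * a ^ 2 ^ (i : ℕ)) := by
  have h2 : (2 : K) = 0 := hK2
  have m1 : a ^ 3 + a ^ 5 + a ^ 9 = a := by linear_combination ((1 : K) * a ^ 6 + (-1 : K) * a ^ 5 + (1 : K) * a ^ 4 + (-2 : K) * a ^ 3 + (4 : K) * a ^ 2 + (-5 : K) * a + (8 : K)) * ha + ((-6 : K) * a ^ 2 + (2 : K) * a + (-4 : K)) * h2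
  have m2 : a ^ 5 + a ^ 8 + a ^ 14 = 0 := by linear_combination ((1 : K) * a ^ 11 + (-1 : K) * a ^ 10 + (1 : K) * a ^ 9 + (-2 : K) * a ^ 8 + (3 : K) * a ^ 7 + (-4 : K) * a ^ 6 + (7 : K) * a ^ 5 + (-10 : K) * a ^ 4 + (14 : K) * a ^ 3 + (-20 : K) * a ^ 2 + (30 : K) * a + (-44 : K)) * ha + ((32 : K) * a ^ 2 + (-15 : K) * a + (22 : K)) * h2
  have m3 : a ^ 9 + a ^ 14 + a ^ 24 = 0 := by linear_combination ((1 : K) * a ^ 21 + (-1 : K) * a ^ 20 + (1 : K) * a ^ 19 + (-2 : K) * a ^ 18 + (3 : K) * a ^ 17 + (-4 : K) * a ^ 16 + (6 : K) * a ^ 15 + (-9 : K) * a ^ 14 + (13 : K) * a ^ 13 + (-19 : K) * a ^ 12 + (29 : K) * a ^ 11 + (-42 : K) * a ^ 10 + (61 : K) * a ^ 9 + (-90 : K) * a ^ 8 + (132 : K) * a ^ 7 + (-192 : K) * a ^ 6 + (282 : K) * a ^ 5 + (-414 : K) * a ^ 4 + (606 : K) * a ^ 3 + (-888 : K) * a ^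 2 + (1302 : K) * a + (-1908 : K)) * ha + ((1398 : K) * a ^ 2 + (-651 : K) * a + (954 : K)) * h2
  have m4 : a ^ 4 + a ^ 6 + a ^ 10 = a ^ 2 := by linear_combination ((1 : K) * a ^ 7 + (-1 : K) * a ^ 6 + (1 : K) * a ^ 5 + (-2 : K) * a ^ 4 + (4 : K) * a ^ 3 + (-5 : K) * a ^ 2 + (8 : K) * a + (-12 : K)) * ha + ((8 : K) * a ^ 2 + (-4 : K) * a + (6 : K)) * h2
  have m5 : a ^ 7 + a ^ 10 + a ^ 16 = 0 := by linear_combination ((1 : K) * a ^ 13 + (-1 : K) * a ^ 12 + (1 : K) * a ^ 11 + (-2 : K) * a ^ 10 + (3 : K) * a ^ 9 + (-4 : K) * a ^ 8 + (7 : K) * a ^ 7 + (-10 : K) * a ^ 6 + (14 : K) * a ^ 5 + (-20 : K) * a ^ 4 + (30 : K) * a ^ 3 + (-44 : K) * a ^ 2 + (64 : K) * a + (-94 : K)) * ha + ((69 : K) * a ^ 2 + (-32 : K) * a + (47 : K)) * h2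
  have m6 : a ^ 13 + a ^ 18 + a ^ 28 = 0 := by linear_combination ((1 : K) * a ^ 25 + (-1 : K) * a ^ 24 + (1 : K) * a ^ 23 + (-2 : K) * a ^ 22 + (3 : K) * a ^ 21 + (-4 : K) * a ^ 20 + (6 : K) * a ^ 19 + (-9 : K) * a ^ 18 + (13 : K) * a ^ 17 + (-19 : K) * a ^ 16 + (29 : K) * a ^ 15 + (-42 : K) * a ^ 14 + (61 : K) * a ^ 13 + (-90 : K) * a ^ 12 + (132 : K) * a ^ 11 + (-192 : K) * a ^ 10 + (282 : K) * a ^ 9 + (-414 : K) * a ^ 8 + (606 : K) * a ^ 7 + (-888 : K) * a ^ 6 + (1302 : K) * a ^ 5 + (-1908 : K) * a ^ 4 + (2796 : K) * a ^ 3 + (-4098 : K) * a ^ 2 + (6006 : K) * a + (-8802 : K)) * ha + ((6450 : K) * a ^ 2 + (-3003 : K) * a + (4401 : K)) * h2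
  have m7 : a ^ 6 + a ^ 8 + a ^ 12 = a ^ 4 := by linear_combination ((1 : K) * a ^ 9 + (-1 : K) * a ^ 8 + (1 : K) * a ^ 7 + (-2 : K) * a ^ 6 + (4 : K) * a ^ 5 + (-5 : K) * a ^ 4 + (8 : K) * a ^ 3 + (-12 : K) * a ^ 2 + (16 : K) * a + (-24 : K)) * ha + ((18 : K) * a ^ 2 + (-8 : K) * a + (12 : K)) * h2
  have m8 : a ^ 11 + a ^ 14 + a ^ 20 = 0 := by linear_combination ((1 : K) * a ^ 17 + (-1 : K) * a ^ 16 + (1 : K) * a ^ 15 + (-2 : K) * a ^ 14 + (3 : K) * a ^ 13 + (-4 : K) * a ^ 12 + (7 : K) * a ^ 11 + (-10 : K) * a ^ 10 + (14 : K) * a ^ 9 + (-20 : K) * a ^ 8 + (30 : K) * a ^ 7 + (-44 : K) * a ^ 6 + (64 : K) * a ^ 5 + (-94 : K) * a ^ 4 + (138 : K) * a ^ 3 + (-202 : K) * a ^ 2 + (296 : K) * a + (-434 : K)) * ha + ((318 : K) * a ^ 2 + (-148 : K) * a + (217 : K)) * h2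
  have m9 : a ^ 21 + a ^ 26 + a ^ 36 = 0 := by linear_combination ((1 : K) * a ^ 33 + (-1 : K) * a ^ 32 + (1 : K) * a ^ 31 + (-2 : K) * a ^ 30 + (3 : K) * a ^ 29 + (-4 : K) * a ^ 28 + (6 : K) * a ^ 27 + (-9 : K) * a ^ 26 + (13 : K) * a ^ 25 + (-19 : K) * a ^ 24 + (29 : K) * a ^ 23 + (-42 : K) * a ^ 22 + (61 : K) * a ^ 21 + (-90 : K) * a ^ 20 + (132 : K) * a ^ 19 + (-192 : K) * a ^ 18 + (282 : K) * a ^ 17 + (-414 : K) * a ^ 16 + (606 : K) * a ^ 15 + (-888 : K) * a ^ 14 + (1302 : K) * a ^ 13 + (-1908 : K) * a ^ 12 + (2796 : K) * a ^ 11 + (-4098 : K) * a ^ 10 + (6006 : K) * a ^ 9 + (-8802 : K) * a ^ 8 + (12900 : K) * a ^ 7 + (-18906 : K) * a ^ 6 + (27708 : K) * a ^ 5 + (-40608 : K) * a ^ 4 + (59514 : K) * a ^ 3 + (-87222 : K) * a ^ 2 + (127830 : K) * a + (-187344 : K)) * ha + ((137283 : K) * a ^ 2 + (-63915 : K) * a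 + (93672 : K)) * h2
  have h1 : b * a = (b * a ^ 2 + (b * a ^ 2) ^ 2 + (b * a ^ 2) ^ 4) * a
      + (b * a ^ 3 + (b * a ^ 3) ^ 2 + (b * a ^ 3) ^ 4) * a ^ 2
      + (b * a ^ 5 + (b * a ^ 5) ^ 2 + (b * a ^ 5) ^ 4) * a ^ 4 := by
    linear_combination (-b) * m1 - b ^ 2 * m2 - b ^ 4 * m3
  have hh2 : b * a ^ 2 = (b * a ^ 3 + (b * a ^ 3) ^ 2 + (b * a ^ 3) ^ 4) * a
      + (b * a ^ 4 + (b * a ^ 4) ^ 2 + (b * a ^ 4) ^ 4) * a ^ 2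
      + (b * a ^ 6 + (b * a ^ 6) ^ 2 + (b * a ^ 6) ^ 4) * a ^ 4 := by
    linear_combination (-b) * m4 - b ^ 2 * m5 - b ^ 4 * m6
  have hh3 : b * a ^ 4 = (b * a ^ 5 + (b * a ^ 5) ^ 2 + (b * a ^ 5) ^ 4) * a
      + (b * a ^ 6 + (b * a ^ 6) ^ 2 + (b * a ^ 6) ^ 4) * a ^ 2
      + (b * a ^ 8 + (b * a ^ 8) ^ 2 + (b * a ^ 8) ^ 4) * a ^ 4 := by
    linear_combination (-b) * m7 - b ^ 2 * m8 - b ^ 4 * m9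
  rw [Fin.sum_univ_three, Fin.sum_univ_three]
  norm_num
  rcases htr (b * a ^ 2) with t2 | t2 <;> rcases htr (b * a ^ 3) with t3 | t3 <;>
    rcases htr (b * a ^ 4) with t4 | t4 <;> rcases htr (b * a ^ 5) with t5 | t5 <;>
    rcases htr (b * a ^ 6) with t6 | t6 <;> rcases htr (b * a ^ 8) with t8 | t8 <;>
  · rw [t2, t3, t5] at h1
    rw [t3, t4, t6] at hh2
    rw [t5, t6, t8] at hh3
    simp only [zero_mul, one_mul, zero_add, add_zero] at h1 hh2 hh3
    rw [h1, hh2, hh3]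
    try simp only [Matrix.single_add, Matrix.single_zero, TensorProduct.add_tmul,
      TensorProduct.tmul_add, TensorProduct.zero_tmul, TensorProduct.tmul_zero, add_zero, zero_add]
    try abel

/-- separability element of `M₂(F₈)` over `F₂`. -/
theorem matrix_separability_element
    (a : GaloisField 2 3) (ha : a ^ 3 + a ^ 2 + 1 = 0) :
    (∀ Y : MatF8,
      ((∑ i : Fin 3, (Y * sbm a 0 0 i) ⊗ₜ[ZMod 2] sbm a 0 0 i) +
        ∑ i : Fin 3, (Y * sbm a 1 0 i) ⊗ₜ[ZMod 2] sbm a 0 1 i) =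
      ((∑ i : Fin 3, sbm a 0 0 i ⊗ₜ[ZMod 2] (sbm a 0 0 i * Y)) +
        ∑ i : Fin 3, sbm a 1 0 i ⊗ₜ[ZMod 2] (sbm a 0 1 i * Y))) ∧
    ((∑ i : Fin 3, sbm a 0 0 i * sbm a 0 0 i) +
      ∑ i : Fin 3, sbm a 1 0 i * sbm a 0 1 i) = 1 ∧
    ((∑ i : Fin 3, frobM (sbm a 0 0 i) ⊗ₜ[ZMod 2] frobM (sbm a 0 0 i)) +
      ∑ i : Fin 3, frobM (sbm a 1 0 i) ⊗ₜ[ZMod 2] frobM (sbm a 0 1 i)) =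
      ((∑ i : Fin 3, sbm a 0 0 i ⊗ₜ[ZMod 2] sbm a 0 0 i) +
        ∑ i : Fin 3, sbm a 1 0 i ⊗ₜ[ZMod 2] sbm a 0 1 i) ∧
    ((∑ i : Fin 3,
        (frobM (sbm a 0 0 i) ⊗ₜ[ZMod 2] delM a (sbm a 0 0 i) +
          delM a (sbm a 0 0 i) ⊗ₜ[ZMod 2] sbm a 0 0 i)) +
      ∑ i : Fin 3,
        (frobM (sbm a 1 0 i) ⊗ₜ[ZMod 2] delM a (sbm a 0 1 i) +
          delM a (sbm a 1 0 i) ⊗ₜ[ZMod 2] sbm a 0 1 i)) = 0 := by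
  have h2 : (2 : K) = 0 := hK2
  have q3 : a ^ 4 * a ^ 4 = a := by
    linear_combination ((1 : K) * a ^ 5 + (-1 : K) * a ^ 4 + (1 : K) * a ^ 3 + (-2 : K) * a ^ 2 +
      (3 : K) * a + (-4 : K)) * ha + ((3 : K) * a ^ 2 + (-2 : K) * a + (2 : K)) * h2
  have q1 : a * a = a ^ 2 := by ring
  have q2 : a ^ 2 * a ^ 2 = a ^ 4 := by ring
  refine ⟨?_, ?_, ?_, ?_⟩
  · -- Y p = p Y
    intro Y
    simp only [sbm, Ymul00, Ymul10, mul00Y, mul01Y, TensorProduct.add_tmul,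
      TensorProduct.tmul_add]
    rw [Finset.sum_add_distrib, Finset.sum_add_distrib, Finset.sum_add_distrib,
      Finset.sum_add_distrib]
    rw [comm3 a ha (Y 0 0) 0 0 0 0, comm3 a ha (Y 1 0) 1 0 0 0,
      comm3 a ha (Y 0 1) 0 0 0 1, comm3 a ha (Y 1 1) 1 0 0 1]
    abel
  · -- μ(p) = 1
    simp only [sbm, Matrix.single_mul_single_same, Fin.sum_univ_three]
    norm_num
    rw [q1, q2, q3]
    rw [← Matrix.single_add, ← Matrix.single_add,
      ← Matrix.single_add, ← Matrix.single_add]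
    rw [show a ^ 2 + a ^ 4 + a = 1 by
      linear_combination ((1 : K) * a + (-1 : K)) * ha + (1 : K) * a ^ 2 * h2]
    ext i j
    fin_cases i <;> fin_cases j <;>
      simp [Matrix.single, Matrix.one_apply]
  · -- σ⊗ p = p
    simp only [sbm, frobE, Fin.sum_univ_three]
    norm_num
    rw [q3, q1, q2]
    abel
  · -- δ⊗ p = 0
    simp only [sbm, frobE, d00, d10, d01, TensorProduct.tmul_zero, TensorProduct.zero_tmul,
      add_zero, zero_add, Finset.sum_const_zero]
    rw [Finset.sum_add_distrib, comm3 a ha a 1 0 0 1]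
    rw [add_eq_zero_iff_eq_neg, negTensor]
    simp only [Fin.sum_univ_three]
    norm_num
    rw [q3, q1, q2]
    abel
end
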